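/- arXiv:1611.06201 — 6 statements merged into one kernel-verified Lean document; each statement's English description precedes it below -/
import Mathlib

section
/- Let P be a finite probability space on an alphabet Ω, let α be a Martin-Löf P-random infinite sequence over Ω, and let a, b be distinct elements of Ω. Let β be the infinite sequence over Ω∖{b} obtained by replacing all occurrences of b by a in α. Then β is Martin-Löf Q-random, where Q is the finite probability space on Ω∖{b} defined by Q(a) = P(a) + P(b) and Q(x) = P(x) for all x ∈ Ω∖{a,b}. -/
open scoped BigOperators

namespace Paper

/-- The measure `λ_P([S])` of the open set generated by a set `S` of strings over `Ω`:
the supremum over `n` of the `P`-weight of all length-`n` strings extending some string in `S`. -/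
noncomputable def cylMeasure {Ω : Type*} [Fintype Ω] (P : Ω → ℝ) (S : Set (List Ω)) : ℝ :=
  ⨆ n : ℕ, ∑ τ : Fin n → Ω,
    Set.indicator {τ : Fin n → Ω | ∃ σ ∈ S, σ <+: List.ofFn τ} (fun τ => ∏ i, P (τ i)) τ

/-- The prefix of length `n` of the infinite sequence `α`. -/
def seqPrefix {Ω : Type*} (α : ℕ → Ω) (n : ℕ) : List Ω := List.ofFn fun i : Fin n => α i

/-- `α` belongs to the open set `[S]` generated by the set of strings `S`. -/
def inOpen {Ω : Type*} (S : Set (List Ω)) (α : ℕ → Ω) : Prop :=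
  ∃ σ ∈ S, seqPrefix α σ.length = σ

/-- `P` is a finite probability space on the alphabet `Ω`. -/
def IsFPS {Ω : Type*} [Fintype Ω] (P : Ω → ℝ) : Prop :=
  (∀ a, 0 ≤ P a) ∧ ∑ a, P a = 1

/-- `C ⊆ ℕ × Ω*` is recursively enumerable (under a canonical encoding of the
finite alphabet `Ω` by an initial segment of `ℕ`). -/
def REset {Ω : Type*} [Fintype Ω] (C : Set (ℕ × List Ω)) : Prop :=
  ∃ e : Ω ≃ Fin (Fintype.card Ω),
    REPred fun p : ℕ × List (Fin (Fintype.card Ω)) => (p.1, p.2.map e.symm) ∈ C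

/-- A Martin-Löf `P`-test. -/
def MLTest {Ω : Type*} [Fintype Ω] (P : Ω → ℝ) (C : Set (ℕ × List Ω)) : Prop :=
  REset C ∧ ∀ n : ℕ, 0 < n → cylMeasure P {σ | (n, σ) ∈ C} < (2 : ℝ)⁻¹ ^ n

/-- `α` is Martin-Löf `P`-random. -/
def MLRandom {Ω : Type*} [Fintype Ω] (P : Ω → ℝ) (α : ℕ → Ω) : Prop :=
  ∀ C : Set (ℕ × List Ω), MLTest P C → ∃ n : ℕ, 0 < n ∧ ¬ inOpen {σ | (n, σ) ∈ C} α
section Aux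

variable {Ω : Type*} [Fintype Ω] [DecidableEq Ω] {a b : Ω}

def fmap (hab : a ≠ b) : Ω → {x : Ω // x ≠ b} :=
  fun x => if h : x = b then ⟨a, hab⟩ else ⟨x, h⟩

lemma fiber_sum (hab : a ≠ b) (P : Ω → ℝ) (y : {x : Ω // x ≠ b}) :
    ∑ x : Ω, (if fmap hab x = y then P x else 0)
      = (if (y : Ω) = a then P a + P b else P (y : Ω)) := by
  by_cases hy : (y : Ω) = a
  · rw [if_pos hy]
    have hmem : ∀ x : Ω, fmap hab x = y ↔ (x = a ∨ x = b) := by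
      intro x
      unfold fmap
      by_cases hx : x = b
      · simp only [dif_pos hx, hx, or_true, iff_true]
        exact Subtype.ext hy.symm
      · simp only [dif_neg hx, hx, or_false]
        constructor
        · intro h; have := congrArg Subtype.val h; simpa [hy] using this
        · intro h; exact Subtype.ext (by simpa [hy] using h)
    have h1 : ∀ x ∈ Finset.univ, (if fmap hab x = y then P x else 0)
        = (if x = a ∨ x = b then P x else 0) := fun x _ => if_congr (hmem x) rfl rfl
    rw [Finset.sum_congr rfl h1, ← Finset.sum_filter]
    have h2 : Finset.univ.filter (fun x => x = a ∨ x = b) = ({a, b} : Finset Ω) := by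
      ext x; simp
    rw [h2, Finset.sum_pair hab]
  · rw [if_neg hy]
    have hmem : ∀ x : Ω, fmap hab x = y ↔ x = (y : Ω) := by
      intro x
      unfold fmap
      by_cases hx : x = b
      · simp only [dif_pos hx]
        constructor
        · intro h; exact absurd (congrArg Subtype.val h).symm hy
        · intro h; exact absurd (h ▸ hx : (y : Ω) = b) y.2
      · simp only [dif_neg hx]
        exact ⟨fun h => congrArg Subtype.val h, fun h => Subtype.ext h⟩
    have h1 : ∀ x ∈ Finset.univ, (if fmap hab x = y then P x else 0)
        = (if x = (y : Ω) then P x else 0) := fun x _ => if_congr (hmem x) rfl rfl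
    rw [Finset.sum_congr rfl h1, Finset.sum_ite_eq' Finset.univ (y : Ω) P,
      if_pos (Finset.mem_univ _)]

lemma Q_sum (hab : a ≠ b) (P : Ω → ℝ) (hP : ∑ x, P x = 1) :
    ∑ y : {x : Ω // x ≠ b}, (if (y : Ω) = a then P a + P b else P (y : Ω)) = 1 := by
  have := fun y => (fiber_sum hab P y).symm
  rw [Finset.sum_congr rfl fun y _ => this y, Finset.sum_comm]
  rw [← hP]
  refine Finset.sum_congr rfl fun x _ => ?_
  rw [Finset.sum_ite_eq Finset.univ (fmap hab x) (fun _ => P x), if_pos (Finset.mem_univ _)]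

lemma Q_nonneg (hab : a ≠ b) (P : Ω → ℝ) (hP : ∀ x, 0 ≤ P x) (y : {x : Ω // x ≠ b}) :
    0 ≤ (if (y : Ω) = a then P a + P b else P (y : Ω)) := by
  by_cases hy : (y : Ω) = a
  · rw [if_pos hy]; exact add_nonneg (hP a) (hP b)
  · rw [if_neg hy]; exact hP _

lemma prod_Q (hab : a ≠ b) (P : Ω → ℝ) {m : ℕ} (τ' : Fin m → {x : Ω // x ≠ b}) :
    ∏ i, (if ((τ' i : Ω)) = a then P a + P b else P (τ' i : Ω))
      = ∑ τ : Fin m → Ω, (if (fun i => fmap hab (τ i)) = τ' then ∏ i, P (τ i) else 0) := by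
  have h1 : ∀ i, (if ((τ' i : Ω)) = a then P a + P b else P (τ' i : Ω))
      = ∑ x : Ω, (if fmap hab x = τ' i then P x else 0) :=
    fun i => (fiber_sum hab P (τ' i)).symm
  rw [Finset.prod_congr rfl fun i _ => h1 i]
  rw [Finset.prod_univ_sum (fun _ => Finset.univ) (fun i x => if fmap hab x = τ' i then P x else 0)]
  rw [Fintype.piFinset_univ]
  refine Finset.sum_congr rfl fun τ _ => ?_
  by_cases h : (fun i => fmap hab (τ i)) = τ'
  · rw [if_pos h]
    exact Finset.prod_congr rfl fun i _ => if_pos (congrFun h i)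
  · rw [if_neg h]
    obtain ⟨i, hi⟩ : ∃ i, fmap hab (τ i) ≠ τ' i := by
      by_contra hc
      push_neg at hc
      exact h (funext hc)
    exact Finset.prod_eq_zero (Finset.mem_univ i) (if_neg hi)

lemma cyl_le (hab : a ≠ b) (P : Ω → ℝ) (hP : IsFPS P)
    (S : Set (List {x : Ω // x ≠ b})) :
    cylMeasure P {σ | σ.map (fmap hab) ∈ S}
      ≤ cylMeasure
          (fun x : {x : Ω // x ≠ b} => if (x : Ω) = a then P a + P b else P (x : Ω)) S := by
  classical
  set Q : {x : Ω // x ≠ b} → ℝ :=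
    fun x => if (x : Ω) = a then P a + P b else P (x : Ω) with hQdef
  have hQ0 : ∀ y, 0 ≤ Q y := Q_nonneg hab P hP.1
  have hQ1 : ∑ y, Q y = 1 := Q_sum hab P hP.2
  unfold cylMeasure
  set B : ℕ → ℝ := fun m => ∑ τ' : Fin m → {x : Ω // x ≠ b},
    Set.indicator {τ' : Fin m → {x : Ω // x ≠ b} | ∃ σ ∈ S, σ <+: List.ofFn τ'}
      (fun τ' => ∏ i, Q (τ' i)) τ' with hBdef
  have hprodQ : ∀ m (τ' : Fin m → {x : Ω // x ≠ b}), 0 ≤ ∏ i, Q (τ' i) :=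
    fun m τ' => Finset.prod_nonneg fun i _ => hQ0 _
  have hB1 : ∀ m, B m ≤ 1 := by
    intro m
    have step1 : B m ≤ ∑ τ' : Fin m → {x : Ω // x ≠ b}, ∏ i, Q (τ' i) := by
      refine Finset.sum_le_sum fun τ' _ => ?_
      exact Set.indicator_le_self' (fun x _ => hprodQ m x) τ'
    have step2 : ∑ τ' : Fin m → {x : Ω // x ≠ b}, ∏ i, Q (τ' i) = 1 := by
      rw [← Fintype.piFinset_univ, ← Finset.prod_univ_sum]
      simp [hQ1]
    rw [step2] at step1; exact step1
  refine ciSup_mono ⟨1, ?_⟩ ?_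
  · rintro _ ⟨m, rfl⟩; exact hB1 m
  · intro m
    -- compute B m as a sum over Ω-strings
    have hBm : B m = ∑ τ : Fin m → Ω,
        (if (fun i => fmap hab (τ i)) ∈ {τ' : Fin m → {x : Ω // x ≠ b} | ∃ σ ∈ S, σ <+: List.ofFn τ'}
          then ∏ i, P (τ i) else 0) := by
      rw [hBdef]
      calc ∑ τ' : Fin m → {x : Ω // x ≠ b},
            Set.indicator {τ' | ∃ σ ∈ S, σ <+: List.ofFn τ'} (fun τ' => ∏ i, Q (τ' i)) τ'
          = ∑ τ' : Fin m → {x : Ω // x ≠ b},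
            (if τ' ∈ {τ' : Fin m → {x : Ω // x ≠ b} | ∃ σ ∈ S, σ <+: List.ofFn τ'}
              then ∑ τ : Fin m → Ω, (if (fun i => fmap hab (τ i)) = τ' then ∏ i, P (τ i) else 0)
              else 0) := by
            refine Finset.sum_congr rfl fun τ' _ => ?_
            rw [Set.indicator_apply]
            exact if_congr Iff.rfl (prod_Q hab P τ') rfl
        _ = ∑ τ' : Fin m → {x : Ω // x ≠ b}, ∑ τ : Fin m → Ω,
            (if (fun i => fmap hab (τ i)) = τ'
              then (if τ' ∈ {τ' : Fin m → {x : Ω // x ≠ b} | ∃ σ ∈ S, σ <+: List.ofFn τ'}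
                then ∏ i, P (τ i) else 0) else 0) := by
            refine Finset.sum_congr rfl fun τ' _ => ?_
            by_cases h : τ' ∈ {τ' : Fin m → {x : Ω // x ≠ b} | ∃ σ ∈ S, σ <+: List.ofFn τ'}
            · simp only [if_pos h]
            · simp [h]
        _ = ∑ τ : Fin m → Ω, ∑ τ' : Fin m → {x : Ω // x ≠ b},
            (if (fun i => fmap hab (τ i)) = τ'
              then (if τ' ∈ {τ' : Fin m → {x : Ω // x ≠ b} | ∃ σ ∈ S, σ <+: List.ofFn τ'}
                then ∏ i, P (τ i) else 0) else 0) := Finset.sum_comm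
        _ = ∑ τ : Fin m → Ω,
            (if (fun i => fmap hab (τ i)) ∈ {τ' : Fin m → {x : Ω // x ≠ b} | ∃ σ ∈ S, σ <+: List.ofFn τ'}
              then ∏ i, P (τ i) else 0) := by
            refine Finset.sum_congr rfl fun τ _ => ?_
            rw [Finset.sum_ite_eq Finset.univ (fun i => fmap hab (τ i))
              (fun τ' => if τ' ∈ {τ' : Fin m → {x : Ω // x ≠ b} | ∃ σ ∈ S, σ <+: List.ofFn τ'}
                then ∏ i, P (τ i) else 0), if_pos (Finset.mem_univ _)]
    rw [hBm]
    refine Finset.sum_le_sum fun τ _ => ?_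
    rw [Set.indicator_apply]
    by_cases hτ : τ ∈ {τ : Fin m → Ω | ∃ σ ∈ {σ | σ.map (fmap hab) ∈ S}, σ <+: List.ofFn τ}
    · rw [if_pos hτ]
      obtain ⟨σ, hσS, hσpre⟩ := hτ
      have hmem : (fun i => fmap hab (τ i)) ∈
          {τ' : Fin m → {x : Ω // x ≠ b} | ∃ σ ∈ S, σ <+: List.ofFn τ'} := by
        refine ⟨σ.map (fmap hab), hσS, ?_⟩
        have := hσpre.map (fmap hab)
        rwa [List.map_ofFn] at this
      rw [if_pos hmem]
    · rw [if_neg hτ]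
      by_cases hm : (fun i => fmap hab (τ i)) ∈
          {τ' : Fin m → {x : Ω // x ≠ b} | ∃ σ ∈ S, σ <+: List.ofFn τ'}
      · rw [if_pos hm]; exact Finset.prod_nonneg fun i _ => hP.1 _
      · rw [if_neg hm]

end Aux

/-- If `α` is Martin-Löf `P`-random and `a ≠ b`, then the sequence over
`Ω ∖ {b}` obtained by replacing every occurrence of `b` in `α` by `a` is
Martin-Löf `Q`-random, where `Q a = P a + P b` and `Q x = P x` for `x ≠ a, b`. -/
theorem contraction_random {Ω : Type*} [Fintype Ω] [Nonempty Ω] [DecidableEq Ω]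
    (P : Ω → ℝ) (hP : IsFPS P) (α : ℕ → Ω) (hα : MLRandom P α)
    (a b : Ω) (hab : a ≠ b) :
    MLRandom
      (fun x : {x : Ω // x ≠ b} => if (x : Ω) = a then P a + P b else P (x : Ω))
      (fun n => if h : α n = b then (⟨a, hab⟩ : {x : Ω // x ≠ b}) else ⟨α n, h⟩) := by
  classical
  intro C hC
  set D : Set (ℕ × List Ω) := {p | (p.1, p.2.map (fmap hab)) ∈ C} with hD
  have hDtest : MLTest P D := by
    constructor
    · obtain ⟨e', hre⟩ := hC.1
      refine ⟨Fintype.equivFin Ω, ?_⟩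
      set e := Fintype.equivFin Ω with he
      set h0 : Fin (Fintype.card Ω) → Fin (Fintype.card {x : Ω // x ≠ b}) :=
        fun i => e' (fmap hab (e.symm i)) with hh0
      have hg : Computable (fun p : ℕ × List (Fin (Fintype.card Ω)) => (p.1, p.2.map h0)) := by
        have h1 : Primrec h0 := Primrec.dom_finite h0
        have h2 : Primrec₂ (fun (_ : ℕ × List (Fin (Fintype.card Ω)))
            (i : Fin (Fintype.card Ω)) => h0 i) := h1.comp Primrec.snd
        exact (Primrec.fst.pair (Primrec.list_map Primrec.snd h2)).to_comp
      have hlist : ∀ l : List (Fin (Fintype.card Ω)),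
          (l.map h0).map e'.symm = (l.map e.symm).map (fmap hab) := by
        intro l; simp [List.map_map, hh0, Function.comp]
      unfold REPred at hre ⊢
      refine Partrec.of_eq (hre.comp hg) fun p => ?_
      show (Part.assert ((p.1, (p.2.map h0).map e'.symm) ∈ C) fun _ => Part.some ())
          = Part.assert ((p.1, p.2.map e.symm) ∈ D) fun _ => Part.some ()
      rw [hlist p.2]
      exact rfl
    · intro n hn
      have heq : {σ : List Ω | (n, σ) ∈ D}
          = {σ : List Ω | σ.map (fmap hab) ∈ {σ' | (n, σ') ∈ C}} := rfl
      rw [heq]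
      exact lt_of_le_of_lt (cyl_le hab P hP _) (hC.2 n hn)
  obtain ⟨n, hn, hno⟩ := hα D hDtest
  refine ⟨n, hn, fun hop => hno ?_⟩
  obtain ⟨σ', hσ'C, hpre⟩ := hop
  refine ⟨seqPrefix α σ'.length, ?_, ?_⟩
  · show (n, (seqPrefix α σ'.length).map (fmap hab)) ∈ C
    have hmap : (seqPrefix α σ'.length).map (fmap hab)
        = seqPrefix (fun k => if h : α k = b then (⟨a, hab⟩ : {x : Ω // x ≠ b}) else ⟨α k, h⟩)
            σ'.length := by
      unfold seqPrefix
      rw [List.map_ofFn]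
      rfl
    rw [hmap, hpre]
    exact hσ'C
  · have hlen : (seqPrefix α σ'.length).length = σ'.length := by simp [seqPrefix]
    rw [hlen]


end Paper
end

section
/- Let P and Q be finite probability spaces on an alphabet Ω. If there exists an infinite sequence α over Ω which is both Martin-Löf P-random and Martin-Löf Q-random, then P = Q. -/
open scoped BigOperators

namespace Paper

/- ===== auxiliary machinery ===== -/

open Classical in
/-- count of `a` in a list (classical, no `DecidableEq` needed). -/
noncomputable def lcount {Ω : Type*} (a : Ω) (l : List Ω) : ℕ :=
  (l.map fun b => if b = a then 1 else 0).sum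

open Classical in
lemma lcount_cons {Ω : Type*} (a b : Ω) (l : List Ω) :
    lcount a (b :: l) = (if b = a then 1 else 0) + lcount a l := by
  simp [lcount]

lemma lcount_ofFn {Ω : Type*} [DecidableEq Ω] {n : ℕ} (a : Ω) (τ : Fin n → Ω) :
    lcount a (List.ofFn τ) = ∑ i, if τ i = a then 1 else 0 := by
  simp only [lcount, List.map_ofFn, List.sum_ofFn, Function.comp]
  refine Finset.sum_congr rfl fun i _ => ?_
  by_cases h : τ i = a
  · rw [if_pos h, if_pos h]
  · rw [if_neg h, if_neg h]

lemma lcount_map_equiv {Ω : Type*} {m : ℕ} (e : Ω ≃ Fin m) (a : Ω) (l : List (Fin m)) :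
    lcount a (l.map e.symm) = lcount (e a) l := by
  induction l with
  | nil => rfl
  | cons b l ih =>
      simp only [List.map_cons, lcount_cons, ih]
      congr 1
      by_cases h : b = e a
      · rw [if_pos h, if_pos (by rw [h]; simp)]
      · rw [if_neg h, if_neg (fun hc => h (by rw [← hc]; simp))]

section Measure

variable {Ω : Type*} [Fintype Ω]

lemma prodP_nonneg {P : Ω → ℝ} (hP0 : ∀ a, 0 ≤ P a) {N : ℕ} (τ : Fin N → Ω) :
    0 ≤ ∏ k, P (τ k) := Finset.prod_nonneg fun k _ => hP0 (τ k)

lemma sum_snoc {M : ℕ} (F : (Fin (M + 1) → Ω) → ℝ) :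
    ∑ f : Fin (M + 1) → Ω, F f
      = ∑ τ : Fin M → Ω, ∑ x : Ω, F (Fin.snoc (α := fun _ => Ω) τ x) := by
  rw [← (Fin.snocEquiv (fun _ => Ω)).sum_comp F]
  rw [Fintype.sum_prod_type]
  rw [Finset.sum_comm]
  rfl

lemma marginal {P : Ω → ℝ} (hP1 : ∑ x, P x = 1) {m : ℕ} (g : (Fin m → Ω) → ℝ) :
    ∀ M (h : m ≤ M),
      ∑ τ : Fin M → Ω, g (fun i => τ (Fin.castLE h i)) * ∏ k, P (τ k)
        = ∑ σ : Fin m → Ω, g σ * ∏ k, P (σ k) := by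
  refine Nat.le_induction ?_ ?_
  · refine Finset.sum_congr rfl fun τ _ => ?_
    have h1 : (fun i => τ (Fin.castLE (le_refl m) i)) = τ := by
      funext i; exact congrArg τ (Fin.ext rfl)
    rw [h1]
  · intro M h ih
    rw [sum_snoc]
    have key : ∀ (τ : Fin M → Ω) (x : Ω),
        g (fun i => Fin.snoc (α := fun _ => Ω) τ x (Fin.castLE (le_trans h (Nat.le_succ M)) i))
          * ∏ k, P (Fin.snoc (α := fun _ => Ω) τ x k)
        = (g (fun i => τ (Fin.castLE h i)) * ∏ k, P (τ k)) * P x := by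
      intro τ x
      have h1 : (fun i => Fin.snoc (α := fun _ => Ω) τ x
            (Fin.castLE (le_trans h (Nat.le_succ M)) i))
          = fun i => τ (Fin.castLE h i) := by
        funext i
        have h0 : Fin.castLE (le_trans h (Nat.le_succ M)) i
            = Fin.castSucc (Fin.castLE h i) := Fin.ext rfl
        rw [h0, Fin.snoc_castSucc]
      have h2 : ∏ k, P (Fin.snoc (α := fun _ => Ω) τ x k) = (∏ k, P (τ k)) * P x := by
        rw [Fin.prod_univ_castSucc]
        simp [Fin.snoc_castSucc, Fin.snoc_last]
      rw [h1, h2]; ring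
    calc ∑ τ : Fin M → Ω, ∑ x : Ω,
            g (fun i => Fin.snoc (α := fun _ => Ω) τ x
              (Fin.castLE (le_trans h (Nat.le_succ M)) i))
              * ∏ k, P (Fin.snoc (α := fun _ => Ω) τ x k)
        = ∑ τ : Fin M → Ω, (g (fun i => τ (Fin.castLE h i)) * ∏ k, P (τ k)) * ∑ x, P x := by
          refine Finset.sum_congr rfl fun τ _ => ?_
          rw [Finset.mul_sum]
          exact Finset.sum_congr rfl fun x _ => key τ x
      _ = ∑ σ : Fin m → Ω, g σ * ∏ k, P (σ k) := by
          rw [hP1]; simp only [mul_one]; exact ih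

lemma second_moment [DecidableEq Ω] {P : Ω → ℝ} (hP : (∀ a, 0 ≤ P a) ∧ ∑ a, P a = 1)
    (a : Ω) (N : ℕ) :
    ∑ τ : Fin N → Ω, (∏ k, P (τ k)) *
        ((∑ i, if τ i = a then (1 : ℝ) else 0) - P a * N) ^ 2
      = N * (P a - (P a) ^ 2) := by
  set p : ℝ := P a with hp
  set g : Ω → ℝ := fun x => (if x = a then (1 : ℝ) else 0) - p with hg
  have hind : ∀ f : Ω → ℝ, ∑ x, (if x = a then f x else 0) = f a := by
    intro f
    rw [Finset.sum_ite_eq' Finset.univ a f]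
    simp
  have hg0 : ∑ x, P x * g x = 0 := by
    simp only [hg, mul_sub, Finset.sum_sub_distrib, mul_ite, mul_one, mul_zero]
    rw [hind (fun x => P x), ← Finset.sum_mul, hP.2, ← hp]
    ring
  have hg2 : ∑ x, P x * (g x * g x) = p - p ^ 2 := by
    have : ∀ x, P x * (g x * g x) = P x * p ^ 2 + P x * (if x = a then 1 - 2 * p else 0) := by
      intro x
      by_cases h : x = a
      · have hgx : g x = 1 - p := by simp [hg, h]
        rw [hgx, if_pos h]; ring
      · have hgx : g x = -p := by simp [hg, h]
        rw [hgx, if_neg h]; ring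
    rw [Finset.sum_congr rfl fun x _ => this x, Finset.sum_add_distrib]
    rw [← Finset.sum_mul, hP.2]
    simp only [mul_ite, mul_zero]
    rw [hind (fun x => P x * (1 - 2 * p)), ← hp]
    ring
  have hdev : ∀ τ : Fin N → Ω,
      ((∑ i, if τ i = a then (1 : ℝ) else 0) - p * N) = ∑ i, g (τ i) := by
    intro τ
    simp only [hg, Finset.sum_sub_distrib, Finset.sum_const, Finset.card_univ,
      Fintype.card_fin, nsmul_eq_mul]
    ring
  have inner : ∀ i j : Fin N,
      ∑ τ : Fin N → Ω, (∏ k, P (τ k)) * (g (τ i) * g (τ j))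
        = if i = j then p - p ^ 2 else 0 := by
    intro i j
    set h : Fin N → Ω → ℝ :=
      fun k x => P x * ((if k = i then g x else 1) * (if k = j then g x else 1)) with hh
    have step1 : ∀ τ : Fin N → Ω,
        (∏ k, P (τ k)) * (g (τ i) * g (τ j)) = ∏ k, h k (τ k) := by
      intro τ
      simp only [hh]
      rw [Finset.prod_mul_distrib, Finset.prod_mul_distrib]
      congr 1
      · rw [Finset.prod_ite_eq' Finset.univ i (fun k => g (τ k)),
            Finset.prod_ite_eq' Finset.univ j (fun k => g (τ k))]
        simp
    have step2 : ∑ τ : Fin N → Ω, ∏ k, h k (τ k) = ∏ k, ∑ x, h k x := by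
      rw [Finset.prod_univ_sum]
      rw [Fintype.piFinset_univ]
    rw [Finset.sum_congr rfl fun τ _ => step1 τ, step2]
    by_cases hij : i = j
    · subst hij
      rw [if_pos rfl]
      rw [Finset.prod_eq_single i]
      · simp only [hh, if_pos rfl]
        exact hg2
      · intro k _ hk
        simp only [hh, if_neg hk, one_mul, mul_one]
        exact hP.2
      · simp
    · rw [if_neg hij]
      apply Finset.prod_eq_zero (Finset.mem_univ i)
      simp only [hh, if_pos rfl, if_neg hij, mul_one]
      exact hg0
  calc ∑ τ : Fin N → Ω, (∏ k, P (τ k)) *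
          ((∑ i, if τ i = a then (1 : ℝ) else 0) - p * N) ^ 2
      = ∑ τ : Fin N → Ω, ∑ i, ∑ j, (∏ k, P (τ k)) * (g (τ i) * g (τ j)) := by
        refine Finset.sum_congr rfl fun τ _ => ?_
        rw [hdev τ, sq, Finset.sum_mul_sum, Finset.mul_sum]
        refine Finset.sum_congr rfl fun i _ => ?_
        rw [Finset.mul_sum]
    _ = ∑ i, ∑ j, ∑ τ : Fin N → Ω, (∏ k, P (τ k)) * (g (τ i) * g (τ j)) := by
        rw [Finset.sum_comm]
        refine Finset.sum_congr rfl fun i _ => Finset.sum_comm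
    _ = ∑ i : Fin N, ∑ j : Fin N, if i = j then p - p ^ 2 else 0 := by
        refine Finset.sum_congr rfl fun i _ => Finset.sum_congr rfl fun j _ => inner i j
    _ = N * (p - p ^ 2) := by
        simp [Finset.sum_ite_eq Finset.univ]; ring

lemma cheb [DecidableEq Ω] {P : Ω → ℝ} (hP : (∀ a, 0 ≤ P a) ∧ ∑ a, P a = 1) (a : Ω)
    {N : ℕ} (hN : 0 < N)
    {ε : ℝ} (hε : 0 < ε) (Bad : (Fin N → Ω) → Prop) [DecidablePred Bad]
    (hBad : ∀ τ, Bad τ →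
      ε ^ 2 * (N : ℝ) ^ 2 ≤ ((∑ i, if τ i = a then (1 : ℝ) else 0) - P a * N) ^ 2) :
    ∑ τ : Fin N → Ω, (if Bad τ then ∏ k, P (τ k) else 0) ≤ 1 / (ε ^ 2 * N) := by
  have hNpos : (0 : ℝ) < N := by exact_mod_cast hN
  have key : (∑ τ : Fin N → Ω, (if Bad τ then ∏ k, P (τ k) else 0)) * (ε ^ 2 * (N : ℝ) ^ 2)
      ≤ N * (P a - (P a) ^ 2) := by
    rw [← second_moment hP a N, Finset.sum_mul]
    refine Finset.sum_le_sum fun τ _ => ?_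
    by_cases h : Bad τ
    · rw [if_pos h]
      exact mul_le_mul_of_nonneg_left (hBad τ h) (prodP_nonneg hP.1 τ)
    · rw [if_neg h, zero_mul]
      exact mul_nonneg (prodP_nonneg hP.1 τ) (sq_nonneg _)
  have hvar : (N : ℝ) * (P a - (P a) ^ 2) ≤ N := by
    have h1 : P a ≤ 1 := by
      rw [← hP.2]
      exact Finset.single_le_sum (fun x _ => hP.1 x) (Finset.mem_univ a)
    nlinarith [hP.1 a, sq_nonneg (P a)]
  have hden : (0 : ℝ) < ε ^ 2 * (N : ℝ) ^ 2 := by positivity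
  have h2 := (le_div_iff₀ hden).2 (key.trans hvar)
  calc ∑ τ : Fin N → Ω, (if Bad τ then ∏ k, P (τ k) else 0)
      ≤ (N : ℝ) / (ε ^ 2 * (N : ℝ) ^ 2) := h2
    _ = 1 / (ε ^ 2 * N) := by field_simp

lemma ofFn_take {M m : ℕ} (h : m ≤ M) (τ : Fin M → Ω) :
    (List.ofFn τ).take m = List.ofFn (fun i : Fin m => τ (Fin.castLE h i)) := by
  apply List.ext_getElem
  · simp [h]
  · intro i h1 h2
    simp [List.getElem_take, List.getElem_ofFn]

lemma cylMeasure_le {P : Ω → ℝ} (hP : (∀ a, 0 ≤ P a) ∧ ∑ a, P a = 1)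
    {c : ℕ} (hc : 1 ≤ c) (cond : List Ω → Prop) [DecidablePred cond] (n : ℕ)
    (hmass : ∀ k, n ≤ k →
      ∑ τ : Fin (c * 8 ^ k) → Ω, (if cond (List.ofFn τ) then ∏ i, P (τ i) else 0)
        ≤ (8 : ℝ)⁻¹ ^ k) :
    cylMeasure P {l : List Ω | ∃ k, n ≤ k ∧ l.length = c * 8 ^ k ∧ cond l}
      ≤ 2 * (8 : ℝ)⁻¹ ^ n := by
  set S : Set (List Ω) := {l : List Ω | ∃ k, n ≤ k ∧ l.length = c * 8 ^ k ∧ cond l} with hS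
  apply ciSup_le
  intro M
  set f : (Fin M → Ω) → ℝ := fun τ => ∏ i, P (τ i) with hf
  set kset : ℕ → Set (Fin M → Ω) := fun k =>
    {τ : Fin M → Ω | ((List.ofFn τ).take (c * 8 ^ k)).length = c * 8 ^ k
      ∧ cond ((List.ofFn τ).take (c * 8 ^ k))} with hkset
  have hterm_nonneg : ∀ (k : ℕ) (τ : Fin M → Ω), 0 ≤ Set.indicator (kset k) f τ :=
    fun k τ => Set.indicator_nonneg (fun τ' _ => prodP_nonneg hP.1 τ') τ
  have hpt : ∀ τ : Fin M → Ω,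
      Set.indicator {τ : Fin M → Ω | ∃ σ ∈ S, σ <+: List.ofFn τ} f τ
        ≤ ∑ k ∈ Finset.Icc n M, Set.indicator (kset k) f τ := by
    intro τ
    by_cases hτ : τ ∈ {τ : Fin M → Ω | ∃ σ ∈ S, σ <+: List.ofFn τ}
    · obtain ⟨σ, hσS, hpre⟩ := id hτ
      obtain ⟨k, hk1, hk2, hk3⟩ := hσS
      have hlenM : c * 8 ^ k ≤ M := by
        have h1 := hpre.length_le
        rw [List.length_ofFn] at h1
        omega
      have hkM : k ≤ M := by
        have h8 : k < 8 ^ k := Nat.lt_pow_self (by norm_num)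
        have h9 : 8 ^ k ≤ c * 8 ^ k := Nat.le_mul_of_pos_left _ hc
        omega
      have htake : (List.ofFn τ).take (c * 8 ^ k) = σ := by
        obtain ⟨t, ht⟩ := hpre
        rw [← ht, ← hk2, List.take_left]
      have hmem : τ ∈ kset k := by
        refine ⟨?_, ?_⟩
        · rw [htake, hk2]
        · rw [htake]; exact hk3
      calc Set.indicator {τ : Fin M → Ω | ∃ σ ∈ S, σ <+: List.ofFn τ} f τ
          = f τ := Set.indicator_of_mem hτ f
        _ = Set.indicator (kset k) f τ := (Set.indicator_of_mem hmem f).symm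
        _ ≤ ∑ k ∈ Finset.Icc n M, Set.indicator (kset k) f τ :=
            Finset.single_le_sum (fun j _ => hterm_nonneg j τ)
              (Finset.mem_Icc.2 ⟨hk1, hkM⟩)
    · rw [Set.indicator_of_notMem hτ]
      exact Finset.sum_nonneg fun k _ => hterm_nonneg k τ
  have hswap :
      ∑ τ : Fin M → Ω, ∑ k ∈ Finset.Icc n M, Set.indicator (kset k) f τ
        = ∑ k ∈ Finset.Icc n M, ∑ τ : Fin M → Ω, Set.indicator (kset k) f τ :=
    Finset.sum_comm
  have hper : ∀ k ∈ Finset.Icc n M,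
      ∑ τ : Fin M → Ω, Set.indicator (kset k) f τ ≤ (8 : ℝ)⁻¹ ^ k := by
    intro k hk
    obtain ⟨hnk, hkM⟩ := Finset.mem_Icc.1 hk
    by_cases hNM : c * 8 ^ k ≤ M
    · set g : (Fin (c * 8 ^ k) → Ω) → ℝ :=
        fun σ => if cond (List.ofFn σ) then 1 else 0 with hg
      have hrw : ∀ τ : Fin M → Ω,
          Set.indicator (kset k) f τ
            = g (fun i => τ (Fin.castLE hNM i)) * ∏ i, P (τ i) := by
        intro τ
        have hmemiff : τ ∈ kset k ↔
            cond (List.ofFn (fun i : Fin (c * 8 ^ k) => τ (Fin.castLE hNM i))) := by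
          rw [hkset]
          simp only [Set.mem_setOf_eq, ofFn_take hNM, List.length_ofFn, true_and]
        by_cases hcond : cond (List.ofFn (fun i : Fin (c * 8 ^ k) => τ (Fin.castLE hNM i)))
        · rw [Set.indicator_of_mem (hmemiff.2 hcond) f, hg]
          simp only [if_pos hcond, one_mul, hf]
        · rw [Set.indicator_of_notMem (fun hm => hcond (hmemiff.1 hm)) f, hg]
          simp only [if_neg hcond, zero_mul]
      rw [Finset.sum_congr rfl fun τ _ => hrw τ, marginal hP.2 g M hNM]
      have heq : ∀ σ : Fin (c * 8 ^ k) → Ω,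
          g σ * ∏ i, P (σ i) = if cond (List.ofFn σ) then ∏ i, P (σ i) else 0 := by
        intro σ
        by_cases hcond : cond (List.ofFn σ) <;> simp [hg, hcond]
      rw [Finset.sum_congr rfl fun σ _ => heq σ]
      exact hmass k hnk
    · have hempty : ∀ τ : Fin M → Ω, τ ∉ kset k := by
        intro τ hmem
        have h1 := hmem.1
        rw [List.length_take, List.length_ofFn] at h1
        omega
      rw [Finset.sum_congr rfl fun τ _ => Set.indicator_of_notMem (hempty τ) f]
      simp only [Finset.sum_const_zero]
      positivity
  have hgeom : ∑ k ∈ Finset.Icc n M, (8 : ℝ)⁻¹ ^ k ≤ 2 * (8 : ℝ)⁻¹ ^ n := by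
    have h1 : Finset.Icc n M = Finset.Ico n (M + 1) := by
      rw [Finset.Ico_add_one_right_eq_Icc]
    rw [h1]
    have h2 := geom_sum_Ico_le_of_lt_one (x := (8 : ℝ)⁻¹) (by norm_num) (by norm_num)
      (m := n) (n := M + 1)
    refine h2.trans ?_
    have h3 : (0 : ℝ) ≤ (8 : ℝ)⁻¹ ^ n := by positivity
    rw [show (1 : ℝ) - (8 : ℝ)⁻¹ = 7 / 8 by norm_num, div_le_iff₀ (by norm_num)]
    nlinarith
  calc ∑ τ : Fin M → Ω,
        Set.indicator {τ : Fin M → Ω | ∃ σ ∈ S, σ <+: List.ofFn τ} f τ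
      ≤ ∑ τ : Fin M → Ω, ∑ k ∈ Finset.Icc n M, Set.indicator (kset k) f τ :=
        Finset.sum_le_sum fun τ _ => hpt τ
    _ = ∑ k ∈ Finset.Icc n M, ∑ τ : Fin M → Ω, Set.indicator (kset k) f τ := hswap
    _ ≤ ∑ k ∈ Finset.Icc n M, (8 : ℝ)⁻¹ ^ k := Finset.sum_le_sum hper
    _ ≤ 2 * (8 : ℝ)⁻¹ ^ n := hgeom

end Measure

section Tests

variable {Ω : Type*} [Fintype Ω]

/-- The generic statistical test set. -/
def genSet (a : Ω) (u1 v1 u2 v2 c : ℕ) : Set (ℕ × List Ω) :=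
  {x | ∃ k, x.1 ≤ k ∧ x.2.length = c * 8 ^ k ∧
    u1 * (c * 8 ^ k) + v1 * lcount a x.2 ≤ u2 * (c * 8 ^ k) + v2 * lcount a x.2}

lemma foldr_or_eq (g : ℕ → Bool) (l : List ℕ) :
    (l.foldr (fun k s => g k || s) false = true) ↔ ∃ k ∈ l, g k = true := by
  induction l with
  | nil => simp
  | cons b l ih => simp [ih, Bool.or_eq_true]

lemma cnt_foldr {m : ℕ} (ea : Fin m) (l : List (Fin m)) :
    l.foldr (fun b s => if b = ea then s + 1 else s) 0 = lcount ea l := by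
  induction l with
  | nil => rfl
  | cons b l ih =>
      rw [List.foldr_cons, ih, lcount_cons]
      by_cases h : b = ea
      · rw [if_pos h, if_pos h]; omega
      · rw [if_neg h, if_neg h]; omega

lemma re_genSet (a : Ω) (u1 v1 u2 v2 c : ℕ) (hc : 1 ≤ c) :
    REset (genSet a u1 v1 u2 v2 c) := by
  refine ⟨Fintype.equivFin Ω, ?_⟩
  set d := Fintype.card Ω with hd
  set e := Fintype.equivFin Ω with he
  set ea := e a with hea
  have hpow : Primrec₂ (· ^ · : ℕ → ℕ → ℕ) := Primrec₂.unpaired'.1 Nat.Primrec.pow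
  set cnt : List (Fin d) → ℕ :=
    fun l => l.foldr (fun b s => if b = ea then s + 1 else s) 0 with hcnt
  set inner : (ℕ × List (Fin d)) → ℕ → Bool := fun x k =>
    (decide (x.1 ≤ k) && decide (x.2.length = c * 8 ^ k))
      && decide (u1 * (c * 8 ^ k) + v1 * cnt x.2 ≤ u2 * (c * 8 ^ k) + v2 * cnt x.2) with hinner
  set F : (ℕ × List (Fin d)) → Bool := fun x =>
    (List.range (x.2.length + 1)).foldr (fun k s => inner x k || s) false with hF
  apply ComputablePred.to_re
  rw [ComputablePred.computable_iff]
  refine ⟨F, ?_, ?_⟩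
  · -- computability
    apply Primrec.to_comp
    have hcntP : Primrec cnt := by
      apply Primrec.list_foldr (f := fun l : List (Fin d) => l)
        (g := fun _ => 0) (h := fun _ (p : Fin d × ℕ) => if p.1 = ea then p.2 + 1 else p.2)
        Primrec.id (Primrec.const 0)
      exact Primrec.ite
        (Primrec.eq.comp (Primrec.fst.comp Primrec.snd) (Primrec.const ea))
        (Primrec.succ.comp (Primrec.snd.comp Primrec.snd))
        (Primrec.snd.comp Primrec.snd)
    have pw : Primrec fun q : (ℕ × List (Fin d)) × ℕ => c * 8 ^ q.2 :=
      Primrec.nat_mul.comp (Primrec.const c) (hpow.comp (Primrec.const 8) Primrec.snd)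
    have cntq : Primrec fun q : (ℕ × List (Fin d)) × ℕ => cnt q.1.2 :=
      hcntP.comp (Primrec.snd.comp Primrec.fst)
    have innerP : Primrec fun q : (ℕ × List (Fin d)) × ℕ => inner q.1 q.2 := by
      exact Primrec.and.comp
        (Primrec.and.comp
          (Primrec.nat_le.comp (Primrec.fst.comp Primrec.fst) Primrec.snd).decide
          (Primrec.eq.comp (Primrec.list_length.comp (Primrec.snd.comp Primrec.fst)) pw).decide)
        (Primrec.nat_le.comp
          (Primrec.nat_add.comp (Primrec.nat_mul.comp (Primrec.const u1) pw)
            (Primrec.nat_mul.comp (Primrec.const v1) cntq))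
          (Primrec.nat_add.comp (Primrec.nat_mul.comp (Primrec.const u2) pw)
            (Primrec.nat_mul.comp (Primrec.const v2) cntq))).decide
    have hrange : Primrec fun x : ℕ × List (Fin d) => List.range (x.2.length + 1) :=
      Primrec.list_range.comp (Primrec.succ.comp (Primrec.list_length.comp Primrec.snd))
    have innerP2 : Primrec₂ inner := innerP.to₂
    exact Primrec.list_foldr hrange (Primrec.const false)
      ((Primrec.or.comp (innerP2.comp Primrec.fst (Primrec.fst.comp Primrec.snd))
        (Primrec.snd.comp Primrec.snd)).to₂)
  · -- correctness
    funext x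
    apply propext
    rw [hF]
    rw [foldr_or_eq (fun k => inner x k) (List.range (x.2.length + 1))]
    constructor
    · rintro ⟨k, h1, h2, h3⟩
      rw [List.length_map] at h2
      refine ⟨k, ?_, ?_⟩
      · rw [List.mem_range]
        have h8 : k < 8 ^ k := Nat.lt_pow_self (by norm_num)
        have h9 : 8 ^ k ≤ c * 8 ^ k := Nat.le_mul_of_pos_left _ hc
        omega
      · rw [hinner]
        simp only [hcnt, Bool.and_eq_true, decide_eq_true_eq]
        rw [cnt_foldr ea x.2]
        rw [lcount_map_equiv e a x.2] at h3
        exact ⟨⟨h1, h2⟩, h3⟩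
    · rintro ⟨k, _, hk⟩
      rw [hinner] at hk
      simp only [hcnt, Bool.and_eq_true, decide_eq_true_eq] at hk
      rw [cnt_foldr ea x.2] at hk
      obtain ⟨⟨h1, h2⟩, h3⟩ := hk
      refine ⟨k, h1, ?_, ?_⟩
      · rw [List.length_map]; exact h2
      · rw [lcount_map_equiv e a x.2]; exact h3

lemma genSet_sections (a : Ω) (u1 v1 u2 v2 c n : ℕ) :
    {σ : List Ω | (n, σ) ∈ genSet a u1 v1 u2 v2 c}
      = {l : List Ω | ∃ k, n ≤ k ∧ l.length = c * 8 ^ k ∧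
          u1 * l.length + v1 * lcount a l ≤ u2 * l.length + v2 * lcount a l} := by
  ext l
  simp only [Set.mem_setOf_eq, genSet]
  constructor
  · rintro ⟨k, h1, h2, h3⟩; exact ⟨k, h1, h2, by rw [h2]; exact h3⟩
  · rintro ⟨k, h1, h2, h3⟩; exact ⟨k, h1, h2, by rw [← h2]; exact h3⟩

lemma two_mul_inv8_lt {n : ℕ} (hn : 0 < n) : 2 * (8 : ℝ)⁻¹ ^ n < (2 : ℝ)⁻¹ ^ n := by
  have h8 : (8 : ℝ)⁻¹ ^ n = (2 : ℝ)⁻¹ ^ n * (4 : ℝ)⁻¹ ^ n := by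
    rw [← mul_pow]; norm_num
  have h4 : (4 : ℝ)⁻¹ ^ n ≤ (4 : ℝ)⁻¹ ^ 1 :=
    pow_le_pow_of_le_one (by norm_num) (by norm_num) hn
  have h2 : (0 : ℝ) < (2 : ℝ)⁻¹ ^ n := by positivity
  rw [h8]
  calc 2 * ((2 : ℝ)⁻¹ ^ n * (4 : ℝ)⁻¹ ^ n) = (2 * (4 : ℝ)⁻¹ ^ n) * (2 : ℝ)⁻¹ ^ n := by ring
    _ ≤ (2 * (4 : ℝ)⁻¹ ^ 1) * (2 : ℝ)⁻¹ ^ n := by nlinarith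
    _ < (2 : ℝ)⁻¹ ^ n := by nlinarith

lemma mltest_genSet [DecidableEq Ω] {P : Ω → ℝ} (hP : IsFPS P) (a : Ω)
    (u1 v1 u2 v2 c : ℕ) (hc : 1 ≤ c) {ε : ℝ} (hε : 0 < ε) (hεc : 1 ≤ ε ^ 2 * c)
    (hdev : ∀ (N : ℕ) (τ : Fin N → Ω),
      u1 * N + v1 * lcount a (List.ofFn τ) ≤ u2 * N + v2 * lcount a (List.ofFn τ) →
      ε ^ 2 * (N : ℝ) ^ 2 ≤ ((∑ i, if τ i = a then (1 : ℝ) else 0) - P a * N) ^ 2) :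
    MLTest P (genSet a u1 v1 u2 v2 c) := by
  constructor
  · exact re_genSet a u1 v1 u2 v2 c hc
  · intro n hn
    rw [genSet_sections]
    have hmass : ∀ k, n ≤ k →
        ∑ τ : Fin (c * 8 ^ k) → Ω,
          (if u1 * (List.ofFn τ).length + v1 * lcount a (List.ofFn τ)
              ≤ u2 * (List.ofFn τ).length + v2 * lcount a (List.ofFn τ)
            then ∏ i, P (τ i) else 0)
          ≤ (8 : ℝ)⁻¹ ^ k := by
      intro k _
      have hN : 0 < c * 8 ^ k := by positivity
      have hch := cheb hP a hN hε
        (Bad := fun τ : Fin (c * 8 ^ k) → Ω =>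
          u1 * (c * 8 ^ k) + v1 * lcount a (List.ofFn τ)
            ≤ u2 * (c * 8 ^ k) + v2 * lcount a (List.ofFn τ))
        (fun τ h => hdev (c * 8 ^ k) τ h)
      have hrw : ∑ τ : Fin (c * 8 ^ k) → Ω,
          (if u1 * (List.ofFn τ).length + v1 * lcount a (List.ofFn τ)
              ≤ u2 * (List.ofFn τ).length + v2 * lcount a (List.ofFn τ)
            then ∏ i, P (τ i) else 0)
          = ∑ τ : Fin (c * 8 ^ k) → Ω,
          (if u1 * (c * 8 ^ k) + v1 * lcount a (List.ofFn τ)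
              ≤ u2 * (c * 8 ^ k) + v2 * lcount a (List.ofFn τ)
            then ∏ i, P (τ i) else 0) := by
        refine Finset.sum_congr rfl fun τ _ => ?_
        simp only [List.length_ofFn]
      rw [hrw]
      refine hch.trans ?_
      have h8k : (0 : ℝ) < (8 : ℝ) ^ k := by positivity
      have hc0 : (0 : ℝ) < (c : ℝ) := by
        have : 0 < c := hc
        exact_mod_cast this
      have hNc : ((c * 8 ^ k : ℕ) : ℝ) = (c : ℝ) * 8 ^ k := by push_cast; ring
      have h1 : (8 : ℝ)⁻¹ ^ k = 1 / 8 ^ k := by rw [inv_pow, one_div]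
      rw [hNc, h1, div_le_div_iff₀ (by positivity) h8k]
      have h2 := mul_le_mul_of_nonneg_right hεc h8k.le
      nlinarith
    have hb := cylMeasure_le hP hc
      (cond := fun l : List Ω =>
        u1 * l.length + v1 * lcount a l ≤ u2 * l.length + v2 * lcount a l) n hmass
    exact lt_of_le_of_lt hb (two_mul_inv8_lt hn)

lemma key {P Q : Ω → ℝ} (hP : IsFPS P) (hQ : IsFPS Q) (a : Ω)
    (hlt : P a < Q a) (α : ℕ → Ω) (hA : MLRandom P α) (hB : MLRandom Q α) : False := by
  classical
  obtain ⟨t, ht1, ht2⟩ := exists_rat_btwn hlt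
  have hp0 : 0 ≤ P a := hP.1 a
  have ht0 : 0 < (t : ℝ) := lt_of_le_of_lt hp0 ht1
  have htq : 0 < t := by exact_mod_cast ht0
  set u : ℕ := t.num.toNat with hu
  set v : ℕ := t.den with hv
  have hv0 : 0 < v := t.pos
  have hvR : (0 : ℝ) < (v : ℝ) := by exact_mod_cast hv0
  have huv : (u : ℝ) / (v : ℝ) = (t : ℝ) := by
    have hnum : ((t.num.toNat : ℤ) : ℝ) = (t.num : ℝ) := by
      exact_mod_cast congrArg (Int.cast : ℤ → ℝ) (Int.toNat_of_nonneg (le_of_lt (Rat.num_pos.2 htq)))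
    rw [Rat.cast_def, hu, hv]
    push_cast at hnum ⊢
    rw [hnum]
  set ε : ℝ := min ((t : ℝ) - P a) (Q a - (t : ℝ)) with hε
  have hεpos : 0 < ε := lt_min (by linarith) (by linarith)
  set c : ℕ := max 1 ⌈1 / ε ^ 2⌉₊ with hcdef
  have hc1 : 1 ≤ c := le_max_left _ _
  have hεc : 1 ≤ ε ^ 2 * c := by
    have h1 : 1 / ε ^ 2 ≤ (⌈1 / ε ^ 2⌉₊ : ℝ) := Nat.le_ceil _
    have h2 : ((⌈1 / ε ^ 2⌉₊ : ℕ) : ℝ) ≤ (c : ℝ) := by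
      exact Nat.cast_le.2 (le_max_right 1 ⌈1 / ε ^ 2⌉₊)
    have h3 : 1 / ε ^ 2 ≤ (c : ℝ) := le_trans h1 h2
    have h4 : (0 : ℝ) < ε ^ 2 := by positivity
    rw [div_le_iff₀ h4] at h3
    linarith
  have hcast : ∀ {N : ℕ} (τ : Fin N → Ω),
      ((lcount a (List.ofFn τ) : ℕ) : ℝ) = ∑ i, if τ i = a then (1 : ℝ) else 0 := by
    intro N τ
    rw [lcount_ofFn]
    push_cast
    refine Finset.sum_congr rfl fun i _ => ?_
    by_cases h : τ i = a <;> simp [h]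
  have testP : MLTest P (genSet a u 0 0 v c) := by
    refine mltest_genSet hP a u 0 0 v c hc1 hεpos hεc ?_
    intro N τ hcond
    simp only [zero_mul, add_zero, zero_add] at hcond
    set S : ℝ := ∑ i, if τ i = a then (1 : ℝ) else 0 with hSdef
    have hSc : ((lcount a (List.ofFn τ) : ℕ) : ℝ) = S := hcast τ
    have h1 : (u : ℝ) * N ≤ (v : ℝ) * S := by
      rw [← hSc]; exact_mod_cast hcond
    have h2 : (t : ℝ) * N ≤ S := by
      rw [← huv, div_mul_eq_mul_div, div_le_iff₀ hvR]
      linarith [h1]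
    have h3 : ε ≤ (t : ℝ) - P a := min_le_left _ _
    have hN0 : (0 : ℝ) ≤ (N : ℝ) := Nat.cast_nonneg N
    have h4 : ε * N ≤ S - P a * N := by nlinarith
    have h5 : 0 ≤ ε * N := by positivity
    calc ε ^ 2 * (N : ℝ) ^ 2 = (ε * N) ^ 2 := by ring
      _ ≤ (S - P a * N) ^ 2 := pow_le_pow_left₀ h5 h4 2
  have testQ : MLTest Q (genSet a 0 v u 0 c) := by
    refine mltest_genSet hQ a 0 v u 0 c hc1 hεpos hεc ?_
    intro N τ hcond
    simp only [zero_mul, add_zero, zero_add] at hcond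
    set S : ℝ := ∑ i, if τ i = a then (1 : ℝ) else 0 with hSdef
    have hSc : ((lcount a (List.ofFn τ) : ℕ) : ℝ) = S := hcast τ
    have h1 : (v : ℝ) * S ≤ (u : ℝ) * N := by
      rw [← hSc]; exact_mod_cast hcond
    have h2 : S ≤ (t : ℝ) * N := by
      rw [← huv, div_mul_eq_mul_div, le_div_iff₀ hvR]
      linarith [h1]
    have h3 : ε ≤ Q a - (t : ℝ) := min_le_right _ _
    have hN0 : (0 : ℝ) ≤ (N : ℝ) := Nat.cast_nonneg N
    have h4 : ε * N ≤ Q a * N - S := by nlinarith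
    have h5 : 0 ≤ ε * N := by positivity
    have h6 : (S - Q a * N) ^ 2 = (Q a * N - S) ^ 2 := by ring
    calc ε ^ 2 * (N : ℝ) ^ 2 = (ε * N) ^ 2 := by ring
      _ ≤ (Q a * N - S) ^ 2 := pow_le_pow_left₀ h5 h4 2
      _ = (S - Q a * N) ^ 2 := h6.symm
  obtain ⟨n1, _, hA'⟩ := hA _ testP
  obtain ⟨n2, _, hB'⟩ := hB _ testQ
  set k : ℕ := max n1 n2 with hk
  set l : List Ω := seqPrefix α (c * 8 ^ k) with hl
  have hlen : l.length = c * 8 ^ k := by rw [hl]; simp [seqPrefix]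
  have hAk : ¬ (u * (c * 8 ^ k) + 0 * lcount a l ≤ 0 * (c * 8 ^ k) + v * lcount a l) := by
    intro hcond
    exact hA' ⟨l, ⟨k, le_max_left _ _, hlen, hcond⟩, by rw [hlen]⟩
  have hBk : ¬ (0 * (c * 8 ^ k) + v * lcount a l ≤ u * (c * 8 ^ k) + 0 * lcount a l) := by
    intro hcond
    exact hB' ⟨l, ⟨k, le_max_right _ _, hlen, hcond⟩, by rw [hlen]⟩
  simp only [zero_mul, add_zero, zero_add] at hAk hBk
  omega

end Tests


/-- If some infinite sequence over `Ω` is both Martin-Löf `P`-random and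
Martin-Löf `Q`-random, then `P = Q`. -/
theorem uniqueness_of_probability {Ω : Type*} [Fintype Ω] [Nonempty Ω]
    (P Q : Ω → ℝ) (hP : IsFPS P) (hQ : IsFPS Q)
    (h : ∃ α : ℕ → Ω, MLRandom P α ∧ MLRandom Q α) :
    P = Q := by
  by_contra hne
  obtain ⟨α, hA, hB⟩ := h
  have hex : ∃ a, P a ≠ Q a := by
    by_contra hall
    push_neg at hall
    exact hne (funext hall)
  obtain ⟨a, ha⟩ := hex
  rcases lt_or_gt_of_ne ha with hlt | hgt
  · exact (key hP hQ a hlt α hA hB).elim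
  · exact (key hQ hP a hgt α hB hA).elim

end Paper
end

section
/- (Closure under computable shuffling.) Let P be a finite probability space on an alphabet Ω, and let α be a Martin-Löf P-random infinite sequence over Ω. Then, for every injective function f : ℕ⁺ → ℕ⁺, if f is computable then the infinite sequence α_f defined by α_f(n) = α(f(n)) for all n ∈ ℕ⁺ is Martin-Löf P-random. -/
open scoped BigOperators

namespace Paper

section Aux

open Computable Nat.Partrec.Code Encodable

theorem rePred_comp' {α β} [Primcodable α] [Primcodable β] {p : β → Prop}
    (hp : REPred p) {g : α → β} (hg : Computable g) : REPred fun a => p (g a) :=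
  Partrec.comp hp hg

theorem rePred_and' {α} [Primcodable α] {p r : α → Prop} (hp : REPred p)
    (hr : ComputablePred r) : REPred fun a => p a ∧ r a := by
  have h2 : REPred r := hr.to_re
  have hb : Partrec fun a : α =>
      (Part.assert (p a) fun _ => Part.some ()).bind fun _ =>
        Part.assert (r a) fun _ => Part.some () :=
    Partrec.bind hp ((h2.comp Computable.fst).to₂ : Partrec₂ fun (a : α) (_ : Unit) => _)
  refine hb.dom_re.of_eq fun a => ?_
  constructor
  · rintro ⟨⟨hpa, -⟩, hra, -⟩
    exact ⟨hpa, hra⟩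
  · rintro ⟨hpa, hra⟩
    exact ⟨⟨hpa, trivial⟩, hra, trivial⟩

set_option maxHeartbeats 1000000 in
theorem rePred_exists' {α β} [Primcodable α] [Primcodable β] {q : α × β → Prop}
    (h : REPred q) : REPred fun a => ∃ b, q (a, b) := by
  obtain ⟨c, hc⟩ := Nat.Partrec.Code.exists_code.1 h
  have heval : ∀ a b, eval c (encode (a, b)) =
      (Part.assert (q (a, b)) fun _ => Part.some ()).map encode := by
    intro a b
    rw [hc]; simp
  have key : ∀ a b, q (a, b) ↔ ∃ k, (evaln k c (encode (a, b))).isSome := by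
    intro a b
    constructor
    · intro hq
      have : (eval c (encode (a, b))).Dom := by
        rw [heval]; exact ⟨hq, trivial⟩
      obtain ⟨x, hx⟩ := Part.dom_iff_mem.1 this
      obtain ⟨k, hk⟩ := evaln_complete.1 hx
      exact ⟨k, by rw [hk]; rfl⟩
    · rintro ⟨k, hk⟩
      obtain ⟨x, hx⟩ := Option.isSome_iff_exists.1 hk
      have := evaln_sound (c := c) (by exact hx)
      have hdom : (eval c (encode (a, b))).Dom := Part.dom_iff_mem.2 ⟨x, this⟩
      rw [heval] at hdom
      exact hdom.1
  have h1 : Computable fun p : α × ℕ => (decode (α := β) p.2.unpair.2) :=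
    Computable.decode.comp ((Computable.snd.comp Computable.unpair).comp Computable.snd)
  have hpair : Computable fun p : (α × ℕ) × β =>
      (((p.1.2.unpair.1, c), encode (p.1.1, p.2)) : (ℕ × Nat.Partrec.Code) × ℕ) :=
    (((Computable.fst.comp Computable.unpair).comp (Computable.snd.comp Computable.fst)).pair
      (Computable.const c)).pair
      (Computable.encode.comp ((Computable.fst.comp Computable.fst).pair Computable.snd))
  have hev : Computable fun p : (α × ℕ) × β => evaln p.1.2.unpair.1 c (encode (p.1.1, p.2)) := by
    have h := Computable.comp (f := fun a : (ℕ × Nat.Partrec.Code) × ℕ => evaln a.1.1 a.1.2 a.2)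
      primrec_evaln.to_comp hpair
    exact h
  have hGcomp : Computable fun p : α × ℕ =>
      (decode (α := β) p.2.unpair.2).bind fun b =>
        evaln p.2.unpair.1 c (encode (p.1, b)) :=
    Computable.option_bind (f := fun p : α × ℕ => decode (α := β) p.2.unpair.2)
      (g := fun (p : α × ℕ) (b : β) => evaln p.2.unpair.1 c (encode (p.1, b))) h1 hev
  have hpart : Partrec fun a : α => Nat.rfindOpt fun k =>
      (decode (α := β) k.unpair.2).bind fun b =>
        evaln k.unpair.1 c (encode (a, b)) :=
    Partrec.rfindOpt (f := fun (a : α) (k : ℕ) =>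
      (decode (α := β) k.unpair.2).bind fun b =>
        evaln k.unpair.1 c (encode (a, b))) hGcomp
  refine hpart.dom_re.of_eq fun a => ?_
  rw [Nat.rfindOpt_dom]
  constructor
  · rintro ⟨n, u, hu⟩
    simp only [Option.mem_def, Option.bind_eq_some_iff] at hu
    obtain ⟨b, hb, hx⟩ := hu
    exact ⟨b, (key a b).2 ⟨n.unpair.1, by rw [hx]; rfl⟩⟩
  · rintro ⟨b, hb⟩
    obtain ⟨k, hk⟩ := (key a b).1 hb
    obtain ⟨x, hx⟩ := Option.isSome_iff_exists.1 hk
    refine ⟨Nat.pair k (encode b), x, ?_⟩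
    simp only [Option.mem_def, Option.bind_eq_some_iff, Nat.unpair_pair]
    exact ⟨b, encodek b, hx⟩

/-- Bounded-forall boolean recursion helper. -/
theorem boolRec_eq_true (g : ℕ → Bool) :
    ∀ n, (Nat.rec true (fun i IH => IH && g i) n : Bool) = true ↔ ∀ i < n, g i = true := by
  intro n
  induction n with
  | zero => simp
  | succ n ih =>
    simp only [Nat.forall_lt_succ_right]
    rw [Bool.and_eq_true, ih]

section Measure

variable {Ω : Type*} [Fintype Ω]

/-- The level-`m` approximation to `cylMeasure`. -/
noncomputable def lvl (P : Ω → ℝ) (S : Set (List Ω)) (m : ℕ) : ℝ :=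
  ∑ τ : Fin m → Ω,
    Set.indicator {τ : Fin m → Ω | ∃ σ ∈ S, σ <+: List.ofFn τ} (fun τ => ∏ i, P (τ i)) τ

theorem lvl_nonneg {P : Ω → ℝ} (hP : ∀ a, 0 ≤ P a) (S : Set (List Ω)) (m : ℕ) :
    0 ≤ lvl P S m :=
  Finset.sum_nonneg fun τ _ =>
    Set.indicator_nonneg (fun τ _ => Finset.prod_nonneg fun i _ => hP _) _

theorem lvl_le_one {P : Ω → ℝ} (hP : IsFPS P) (S : Set (List Ω)) (m : ℕ) :
    lvl P S m ≤ 1 := by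
  have h1 : lvl P S m ≤ ∑ τ : Fin m → Ω, ∏ i, P (τ i) :=
    Finset.sum_le_sum fun τ _ =>
      Set.indicator_le_self' (fun τ _ => Finset.prod_nonneg fun i _ => hP.1 _) τ
  refine h1.trans_eq ?_
  rw [← Fintype.piFinset_univ, ← Finset.prod_univ_sum]
  simp [hP.2]

theorem lvl_le_cylMeasure {P : Ω → ℝ} (hP : IsFPS P) (S : Set (List Ω)) (m : ℕ) :
    lvl P S m ≤ cylMeasure P S :=
  le_ciSup (f := fun m => lvl P S m)
    ⟨1, by rintro x ⟨m, rfl⟩; exact lvl_le_one hP S m⟩ m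

theorem cylMeasure_le_s7 {P : Ω → ℝ} {S : Set (List Ω)} {B : ℝ}
    (h : ∀ m, lvl P S m ≤ B) : cylMeasure P S ≤ B :=
  ciSup_le h

theorem cylMeasure_pullback_le {Ω : Type*} [Fintype Ω] {P : Ω → ℝ} (hP : IsFPS P)
    (f : ℕ → ℕ) (hinj : Function.Injective f) (S : Set (List Ω)) :
    cylMeasure P {ρ : List Ω | ∃ σ ∈ S, ∀ i < σ.length, ρ[f i]? = σ[i]?} ≤
      cylMeasure P S := by
  classical
  set D : Set (List Ω) := {ρ : List Ω | ∃ σ ∈ S, ∀ i < σ.length, ρ[f i]? = σ[i]?} with hD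
  refine cylMeasure_le_s7 fun m => ?_
  -- the threshold K
  have hex : ∃ k, m ≤ f k := by
    by_contra hcon
    push_neg at hcon
    have hsub : (Finset.range (m+1)).image f ⊆ Finset.range m := by
      intro x hx
      simp only [Finset.mem_image] at hx
      obtain ⟨k, -, rfl⟩ := hx
      exact Finset.mem_range.2 (hcon k)
    have hcard := Finset.card_le_card hsub
    rw [Finset.card_image_of_injective _ hinj, Finset.card_range, Finset.card_range] at hcard
    omega
  set K := Nat.find hex with hK
  have hKf : ∀ i, i < K → f i < m := fun i hi => lt_of_not_ge (Nat.find_min hex hi)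
  have hKm : K ≤ m := by
    by_contra hcon
    push_neg at hcon
    have hall : ∀ i : Fin (m+1), f i < m := fun i => hKf i (lt_of_lt_of_le i.2 hcon)
    have hcard := Fintype.card_le_of_injective
      (fun i : Fin (m+1) => (⟨f i, hall i⟩ : Fin m))
      (fun a b hab => Fin.ext (hinj (congrArg Fin.val hab)))
    simp only [Fintype.card_fin] at hcard
    omega
  -- a permutation of `Fin m` sending `i` to `f i` for `i < K`
  have hg : Function.Injective (fun i : Fin K => (⟨f i, hKf i i.2⟩ : Fin m)) :=
    fun a b hab => Fin.ext (hinj (congrArg Fin.val hab))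
  let d : Fin K ≃ {x : Fin m // (x : ℕ) < K} :=
    { toFun := fun i => ⟨⟨i, lt_of_lt_of_le i.2 hKm⟩, i.2⟩
      invFun := fun x => ⟨x.1, x.2⟩
      left_inv := fun i => rfl
      right_inv := fun x => rfl }
  let e : {x : Fin m // (x : ℕ) < K} ≃
      {x : Fin m // x ∈ Set.range (fun i : Fin K => (⟨f i, hKf i i.2⟩ : Fin m))} :=
    d.symm.trans (Equiv.ofInjective _ hg)
  let π : Equiv.Perm (Fin m) := e.extendSubtype
  have hπ : ∀ (i : ℕ) (hiK : i < K) (him : i < m), π ⟨i, him⟩ = ⟨f i, hKf i hiK⟩ := by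
    intro i hiK him
    have h1 := Equiv.extendSubtype_apply_of_mem e ⟨i, him⟩ hiK
    rw [show π ⟨i, him⟩ = e.extendSubtype ⟨i, him⟩ from rfl, h1]
    simp [e, d, Equiv.ofInjective]
  -- the subset property
  have hsubset : {τ : Fin m → Ω | ∃ ρ ∈ D, ρ <+: List.ofFn τ} ⊆
      {τ : Fin m → Ω | ∃ σ ∈ S, σ <+: List.ofFn fun j => τ (π j)} := by
    rintro τ ⟨ρ, ⟨σ, hσS, hmatch⟩, hpre⟩
    have hρm : ρ.length ≤ m := by
      have := hpre.length_le
      simpa using this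
    have hget : ∀ (i : ℕ) (hi : i < σ.length),
        f i < ρ.length ∧ ρ[f i]? = some (σ.get ⟨i, hi⟩) := by
      intro i hi
      have h1 : ρ[f i]? = some (σ.get ⟨i, hi⟩) := by
        exact (hmatch i hi).trans (List.getElem?_eq_getElem hi)
      obtain ⟨hlt, -⟩ := List.getElem?_eq_some_iff.1 h1
      exact ⟨hlt, h1⟩
    have hσK : σ.length ≤ K := by
      by_contra hcon
      push_neg at hcon
      have h1 := (hget K hcon).1
      have h2 : m ≤ f K := by rw [hK]; exact Nat.find_spec hex
      omega
    have hσm : σ.length ≤ m := hσK.trans hKm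
    have hval : ∀ (i : ℕ) (hi : i < σ.length) (him : i < m),
        τ (π ⟨i, him⟩) = σ.get ⟨i, hi⟩ := by
      intro i hi him
      rw [hπ i (lt_of_lt_of_le hi hσK) him]
      obtain ⟨hlt, heq⟩ := hget i hi
      obtain ⟨t, ht⟩ := hpre
      have h2 : (List.ofFn τ)[f i]? = some (σ.get ⟨i, hi⟩) := by
        rw [← ht, List.getElem?_append_left hlt, heq]
      have hfim : f i < m := hKf i (lt_of_lt_of_le hi hσK)
      have h3 : (List.ofFn τ)[f i]? = some (τ ⟨f i, hfim⟩) := by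
        simp [List.getElem?_ofFn, hfim]
      rw [h2] at h3
      exact (Option.some.inj h3).symm
    refine ⟨σ, hσS, ?_⟩
    have hlen : σ.length ≤ (List.ofFn fun j => τ (π j)).length := by simpa using hσm
    rw [List.prefix_iff_eq_take]
    apply List.ext_getElem
    · simp [Nat.min_eq_left hσm]
    · intro i h1 h2
      have him : i < m := lt_of_lt_of_le h1 hσm
      have hv : τ (π ⟨i, him⟩) = σ[i] :=
        (hval i h1 him).trans (List.get_eq_getElem (l := σ) (i := ⟨i, h1⟩))
      simp only [List.getElem_take, List.getElem_ofFn]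
      rw [← hv]
  -- compare the sums
  have hnonneg : ∀ τ : Fin m → Ω, 0 ≤ ∏ i, P (τ i) :=
    fun τ => Finset.prod_nonneg fun i _ => hP.1 _
  have hstep1 : lvl P D m ≤ ∑ τ : Fin m → Ω,
      Set.indicator {τ : Fin m → Ω | ∃ σ ∈ S, σ <+: List.ofFn fun j => τ (π j)}
        (fun τ => ∏ i, P (τ i)) τ :=
    Finset.sum_le_sum fun τ _ =>
      Set.indicator_le_indicator_of_subset hsubset hnonneg τ
  let E : (Fin m → Ω) ≃ (Fin m → Ω) :=
    { toFun := fun τ => fun j => τ (π j)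
      invFun := fun τ => fun j => τ (π.symm j)
      left_inv := fun τ => funext fun j => by simp
      right_inv := fun τ => funext fun j => by simp }
  have hstep2 : ∀ τ : Fin m → Ω,
      Set.indicator {τ' : Fin m → Ω | ∃ σ ∈ S, σ <+: List.ofFn fun j => τ' (π j)}
        (fun τ' => ∏ i, P (τ' i)) τ
      = Set.indicator {τ' : Fin m → Ω | ∃ σ ∈ S, σ <+: List.ofFn τ'}
        (fun τ' => ∏ i, P (τ' i)) (E τ) := by
    intro τ
    have hmem : (τ ∈ {τ' : Fin m → Ω | ∃ σ ∈ S, σ <+: List.ofFn fun j => τ' (π j)}) ↔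
        (E τ ∈ {τ' : Fin m → Ω | ∃ σ ∈ S, σ <+: List.ofFn τ'}) := Iff.rfl
    by_cases hτ : τ ∈ {τ' : Fin m → Ω | ∃ σ ∈ S, σ <+: List.ofFn fun j => τ' (π j)}
    · rw [Set.indicator_of_mem hτ, Set.indicator_of_mem (hmem.1 hτ)]
      exact (Equiv.prod_comp π (fun j => P (τ j))).symm
    · rw [Set.indicator_of_notMem hτ, Set.indicator_of_notMem (fun h => hτ (hmem.2 h))]
  calc lvl P D m ≤ _ := hstep1
    _ = ∑ τ : Fin m → Ω,
        Set.indicator {τ' : Fin m → Ω | ∃ σ ∈ S, σ <+: List.ofFn τ'}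
          (fun τ' => ∏ i, P (τ' i)) (E τ) := Finset.sum_congr rfl fun τ _ => hstep2 τ
    _ = lvl P S m := Fintype.sum_equiv E _ _ (fun τ => rfl)
    _ ≤ cylMeasure P S := lvl_le_cylMeasure hP S m

end Measure

set_option maxHeartbeats 1000000 in
theorem reD {Ω : Type*} [Fintype Ω] (C : Set (ℕ × List Ω)) (e : Ω ≃ Fin (Fintype.card Ω))
    (hre : REPred fun p : ℕ × List (Fin (Fintype.card Ω)) => (p.1, p.2.map e.symm) ∈ C)
    (f : ℕ → ℕ) (hcomp : Computable f) :
    REPred fun p : ℕ × List (Fin (Fintype.card Ω)) =>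
      (p.1, p.2.map e.symm) ∈
        {p : ℕ × List Ω | ∃ σ, (p.1, σ) ∈ C ∧ ∀ i < σ.length, p.2[f i]? = σ[i]?} := by
  classical
  have hchk_comp : Computable (fun x : (ℕ × List (Fin (Fintype.card Ω))) × List (Fin (Fintype.card Ω)) =>
      (Nat.rec true (fun i IH => IH && decide (x.1.2[f i]? = x.2[i]?)) x.2.length : Bool)) := by
    have hlen : Computable fun x : (ℕ × List (Fin (Fintype.card Ω))) × List (Fin (Fintype.card Ω)) =>
        x.2.length := Computable.list_length.comp Computable.snd
    have ha : Computable fun q : ((ℕ × List (Fin (Fintype.card Ω))) × List (Fin (Fintype.card Ω))) × (ℕ × Bool) =>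
        q.2.2 := Computable.snd.comp Computable.snd
    have hb : Computable fun q : ((ℕ × List (Fin (Fintype.card Ω))) × List (Fin (Fintype.card Ω))) × (ℕ × Bool) =>
        q.1.1.2[f q.2.1]? :=
      Computable.list_getElem?.comp (Computable.snd.comp (Computable.fst.comp Computable.fst))
        (hcomp.comp (Computable.fst.comp Computable.snd))
    have hc : Computable fun q : ((ℕ × List (Fin (Fintype.card Ω))) × List (Fin (Fintype.card Ω))) × (ℕ × Bool) =>
        q.1.2[q.2.1]? :=
      Computable.list_getElem?.comp (Computable.snd.comp Computable.fst)
        (Computable.fst.comp Computable.snd)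
    have hd : Computable fun q : ((ℕ × List (Fin (Fintype.card Ω))) × List (Fin (Fintype.card Ω))) × (ℕ × Bool) =>
        decide (q.1.1.2[f q.2.1]? = q.1.2[q.2.1]?) :=
      Primrec.eq.decide.to_comp.comp hb hc
    have hstep : Computable₂ fun (x : (ℕ × List (Fin (Fintype.card Ω))) × List (Fin (Fintype.card Ω))) (p : ℕ × Bool) =>
        (p.2 && decide (x.1.2[f p.1]? = x.2[p.1]?) : Bool) := by
      have h := Computable₂.comp (f := fun a b : Bool => a && b) Primrec.and.to_comp ha hd
      exact h
    have h := Computable.nat_rec hlen (Computable.const true) hstep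
    exact h
  have hr : ComputablePred fun x : (ℕ × List (Fin (Fintype.card Ω))) × List (Fin (Fintype.card Ω)) =>
      ∀ i < x.2.length, x.1.2[f i]? = x.2[i]? := by
    refine ComputablePred.computable_iff.2 ⟨_, hchk_comp, funext fun x => propext ?_⟩
    rw [boolRec_eq_true]
    simp
  have hproj : Computable fun x : (ℕ × List (Fin (Fintype.card Ω))) × List (Fin (Fintype.card Ω)) =>
      ((x.1.1, x.2) : ℕ × List (Fin (Fintype.card Ω))) :=
    (Computable.fst.comp Computable.fst).pair Computable.snd
  have hq : REPred fun x : (ℕ × List (Fin (Fintype.card Ω))) × List (Fin (Fintype.card Ω)) =>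
      (((x.1.1, x.2.map e.symm) ∈ C) ∧ (∀ i < x.2.length, x.1.2[f i]? = x.2[i]?)) :=
    rePred_and' (rePred_comp' hre hproj) hr
  refine (rePred_exists' hq).of_eq fun p => ?_
  simp only [Set.mem_setOf_eq]
  constructor
  · rintro ⟨τ, h1, h2⟩
    refine ⟨τ.map e.symm, h1, ?_⟩
    intro i hi
    rw [List.length_map] at hi
    rw [List.getElem?_map, List.getElem?_map, h2 i hi]
  · rintro ⟨σ, h1, h2⟩
    refine ⟨σ.map e, ?_, ?_⟩
    · have hσ : (σ.map e).map e.symm = σ := by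
        simp [List.map_map]
      rw [hσ]; exact h1
    · intro i hi
      rw [List.length_map] at hi
      apply Option.map_injective e.symm.injective
      have h3 := h2 i hi
      rw [List.getElem?_map] at h3
      rw [h3, List.getElem?_map, Option.map_map]
      simp

end Aux
/-- closure under computable shuffling. If `α` is Martin-Löf `P`-random
and `f` is an injective computable function on positions, then the shuffled sequence
`n ↦ α (f n)` is Martin-Löf `P`-random. -/
theorem closure_under_computable_shuffling {Ω : Type*} [Fintype Ω] [Nonempty Ω]
    (P : Ω → ℝ) (hP : IsFPS P) (α : ℕ → Ω) (hα : MLRandom P α)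
    (f : ℕ → ℕ) (hinj : Function.Injective f) (hcomp : Computable f) :
    MLRandom P (fun n => α (f n)) := by
  classical
  intro C hC
  obtain ⟨⟨e, hre⟩, hmeas⟩ := hC
  set D : Set (ℕ × List Ω) :=
    {p : ℕ × List Ω | ∃ σ, (p.1, σ) ∈ C ∧ ∀ i < σ.length, p.2[f i]? = σ[i]?} with hDdef
  have hDtest : MLTest P D := by
    constructor
    · exact ⟨e, reD C e hre f hcomp⟩
    · intro n hn
      have hEq : {ρ : List Ω | (n, ρ) ∈ D} =
          {ρ : List Ω | ∃ σ ∈ {σ : List Ω | (n, σ) ∈ C},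
            ∀ i < σ.length, ρ[f i]? = σ[i]?} := by
        ext ρ
        rw [hDdef]
        simp only [Set.mem_setOf_eq]
      calc cylMeasure P {ρ | (n, ρ) ∈ D}
          ≤ cylMeasure P {σ | (n, σ) ∈ C} := by
            rw [hEq]
            exact cylMeasure_pullback_le hP f hinj {σ : List Ω | (n, σ) ∈ C}
        _ < (2:ℝ)⁻¹ ^ n := hmeas n hn
  obtain ⟨n, hn, hnot⟩ := hα D hDtest
  refine ⟨n, hn, fun hopen => hnot ?_⟩
  obtain ⟨σ, hσC, hσpre⟩ := hopen
  obtain ⟨L, hfL⟩ : ∃ L, ∀ i < σ.length, f i < L :=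
    ⟨((Finset.range σ.length).sup f) + 1, fun i hi =>
      Nat.lt_succ_of_le (Finset.le_sup (Finset.mem_range.2 hi))⟩
  have hlenL : (seqPrefix α L).length = L := by simp [seqPrefix]
  refine ⟨seqPrefix α L, ⟨σ, hσC, ?_⟩, ?_⟩
  · intro i hi
    have hfi : f i < L := hfL i hi
    have h1 : (seqPrefix α L)[f i]? = some (α (f i)) := by
      simp [seqPrefix, List.getElem?_ofFn, hfi]
    have h2 : σ[i]? = some (α (f i)) := by
      conv_lhs => rw [← hσpre]
      simp [seqPrefix, List.getElem?_ofFn, hi]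
    rw [h1, h2]
  · rw [hlenL]

end Paper
end

section
/- (Closure under selection by a partial computable selection function.) Let P be a finite probability space on an alphabet Ω, let α be a Martin-Löf P-random infinite sequence over Ω, and let f : Ω* → {YES, NO} be a partial computable function. Suppose that f(α↾k) is defined for all k ∈ ℕ, and that the set {k ∈ ℕ : f(α↾k) = YES} is infinite. For each k ∈ ℕ⁺ let s_f(α,k) be the k-th number ℓ ∈ ℕ (in increasing order) such that f(α↾ℓ) = YES. Then the infinite sequence β defined by β(k) = α(s_f(α,k)+1) for all k ∈ ℕ⁺ is Martin-Löf P-random. -/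
open scoped BigOperators

namespace Paper

attribute [local instance 10] Classical.propDecidable

section Measure
variable {Ω : Type*} [Fintype Ω]

/-- weight of a string -/
noncomputable def wL (P : Ω → ℝ) (l : List Ω) : ℝ := (l.map P).prod

@[simp] lemma wL_nil (P : Ω → ℝ) : wL P [] = 1 := rfl

@[simp] lemma wL_cons (P : Ω → ℝ) (a : Ω) (l : List Ω) : wL P (a :: l) = P a * wL P l := by
  simp [wL]

lemma wL_nonneg {P : Ω → ℝ} (hP : ∀ a, 0 ≤ P a) (l : List Ω) : 0 ≤ wL P l := by
  induction l with
  | nil => norm_num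
  | cons a l ih => rw [wL_cons]; exact mul_nonneg (hP a) ih

/-- real-valued indicator of a proposition -/
noncomputable def indη (Q : Prop) (x : ℝ) : ℝ := if Q then x else 0

lemma indη_of {Q : Prop} (h : Q) (x : ℝ) : indη Q x = x := by simp [indη, h]

lemma indη_not {Q : Prop} (h : ¬ Q) (x : ℝ) : indη Q x = 0 := by simp [indη, h]

lemma indη_nonneg {Q : Prop} {x : ℝ} (hx : 0 ≤ x) : 0 ≤ indη Q x := by
  classical by_cases h : Q <;> simp [indη, h, hx]

lemma indη_le {Q : Prop} {x : ℝ} (hx : 0 ≤ x) : indη Q x ≤ x := by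
  classical by_cases h : Q <;> simp [indη, h, hx]

lemma indη_congr {Q R : Prop} (h : Q ↔ R) (x : ℝ) : indη Q x = indη R x := by
  classical simp [indη, h]

lemma indη_mono {Q R : Prop} (h : Q → R) {x : ℝ} (hx : 0 ≤ x) : indη Q x ≤ indη R x := by
  classical
  by_cases hQ : Q
  · rw [indη_of hQ, indη_of (h hQ)]
  · rw [indη_not hQ]; exact indη_nonneg hx

lemma indη_mul (Q : Prop) (x y : ℝ) : indη Q (x * y) = x * indη Q y := by
  classical by_cases h : Q <;> simp [indη, h]

/-- level-`m` approximation of the measure of `[S]` -/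
noncomputable def W (P : Ω → ℝ) (S : Set (List Ω)) (m : ℕ) : ℝ :=
  ∑ τ : Fin m → Ω,
    Set.indicator {τ : Fin m → Ω | ∃ σ ∈ S, σ <+: List.ofFn τ} (fun τ => ∏ i, P (τ i)) τ

lemma cylMeasure_eq_iSup (P : Ω → ℝ) (S : Set (List Ω)) : cylMeasure P S = ⨆ m, W P S m := rfl

lemma W_eq (P : Ω → ℝ) (S : Set (List Ω)) (m : ℕ) :
    W P S m = ∑ τ : Fin m → Ω, indη (∃ σ ∈ S, σ <+: List.ofFn τ) (wL P (List.ofFn τ)) := by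
  classical
  refine Finset.sum_congr rfl fun τ _ => ?_
  rw [Set.indicator_apply]
  simp only [Set.mem_setOf_eq]
  by_cases h : (∃ σ ∈ S, σ <+: List.ofFn τ)
  · rw [if_pos h, indη_of h]
    simp [wL, List.map_ofFn, List.prod_ofFn]
  · rw [if_neg h, indη_not h]

lemma sum_ofFn_succ (g : List Ω → ℝ) (m : ℕ) :
    ∑ τ : Fin (m+1) → Ω, g (List.ofFn τ) = ∑ b : Ω, ∑ τ : Fin m → Ω, g (b :: List.ofFn τ) := by
  calc ∑ τ : Fin (m+1) → Ω, g (List.ofFn τ)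
      = ∑ q : Ω × (Fin m → Ω), g (q.1 :: List.ofFn q.2) := by
        refine Fintype.sum_equiv (Fin.consEquiv fun _ : Fin (m+1) => Ω).symm _ _ fun τ => ?_
        simp only [Fin.consEquiv_symm_apply]
        rw [List.ofFn_succ]
        rfl
    _ = ∑ b : Ω, ∑ τ : Fin m → Ω, g (b :: List.ofFn τ) :=
        Fintype.sum_prod_type (f := fun q : Ω × (Fin m → Ω) => g (q.1 :: List.ofFn q.2))

lemma sum_wL (P : Ω → ℝ) (hP : ∑ a, P a = 1) (m : ℕ) :
    ∑ τ : Fin m → Ω, wL P (List.ofFn τ) = 1 := by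
  induction m with
  | zero => simp
  | succ m ih =>
    rw [sum_ofFn_succ (fun l => wL P l) m]
    calc ∑ b : Ω, ∑ τ : Fin m → Ω, wL P (b :: List.ofFn τ)
        = ∑ b : Ω, P b * ∑ τ : Fin m → Ω, wL P (List.ofFn τ) := by
          refine Finset.sum_congr rfl fun b _ => ?_
          rw [Finset.mul_sum]
          exact Finset.sum_congr rfl fun τ _ => by rw [wL_cons]
      _ = 1 := by rw [ih]; simpa using hP

end Measure


section Sel
variable {Ω : Type*}

/-- the string selected from `ρ` by selection function `f`, with history `h` already read -/
noncomputable def selA (f : List Ω →. Bool) : List Ω → List Ω → List Ω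
  | _, [] => []
  | h, b :: ρ => if true ∈ f h then b :: selA f (h ++ [b]) ρ else selA f (h ++ [b]) ρ

/-- `f` is defined along all prefixes of `ρ` after history `h` -/
def allDef (f : List Ω →. Bool) : List Ω → List Ω → Prop
  | _, [] => True
  | h, b :: ρ => (f h).Dom ∧ allDef f (h ++ [b]) ρ

@[simp] lemma selA_nil (f : List Ω →. Bool) (h : List Ω) : selA f h [] = [] := rfl

lemma selA_cons (f : List Ω →. Bool) (h b ρ) :
    selA f h (b :: ρ) = if true ∈ f h then b :: selA f (h ++ [b]) ρ else selA f (h ++ [b]) ρ := by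
  rw [selA]

@[simp] lemma allDef_nil (f : List Ω →. Bool) (h : List Ω) : allDef f h [] := trivial

lemma allDef_cons (f : List Ω →. Bool) (h b ρ) :
    allDef f h (b :: ρ) ↔ (f h).Dom ∧ allDef f (h ++ [b]) ρ := Iff.rfl

lemma selA_length_le (f : List Ω →. Bool) : ∀ (ρ h : List Ω), (selA f h ρ).length ≤ ρ.length := by
  intro ρ
  induction ρ with
  | nil => simp
  | cons b ρ ih =>
    intro h
    rw [selA_cons]
    by_cases hb : true ∈ f h
    · rw [if_pos hb]
      simpa using Nat.succ_le_succ (ih (h ++ [b]))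
    · rw [if_neg hb]
      exact le_trans (ih (h ++ [b])) (Nat.le_succ _)

lemma selA_append (f : List Ω →. Bool) :
    ∀ (σ τ h : List Ω), selA f h (σ ++ τ) = selA f h σ ++ selA f (h ++ σ) τ := by
  intro σ
  induction σ with
  | nil => simp
  | cons b σ ih =>
    intro τ h
    rw [List.cons_append, selA_cons, selA_cons, ih]
    by_cases hb : true ∈ f h <;> simp [hb, List.append_assoc]

lemma allDef_append (f : List Ω →. Bool) :
    ∀ (σ τ h : List Ω), allDef f h (σ ++ τ) ↔ allDef f h σ ∧ allDef f (h ++ σ) τ := by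
  intro σ
  induction σ with
  | nil => simp
  | cons b σ ih =>
    intro τ h
    rw [List.cons_append, allDef_cons, allDef_cons, ih]
    simp [List.append_assoc, and_assoc]

end Sel

section SelBound
variable {Ω : Type*} [Fintype Ω]

/-- If `σ` has length at most `m`, the total weight of length-`m` strings extending `σ`
is exactly the weight of `σ`. -/
lemma sum_prefix_eq (P : Ω → ℝ) (hP : IsFPS P) :
    ∀ (m : ℕ) (σ : List Ω), σ.length ≤ m →
      ∑ τ : Fin m → Ω, indη (σ <+: List.ofFn τ) (wL P (List.ofFn τ)) = wL P σ := by
  intro m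
  induction m with
  | zero =>
    intro σ hσ
    interval_cases h : σ.length
    rw [List.length_eq_zero_iff] at h
    subst h
    simp only [List.nil_prefix, indη_of]
    exact sum_wL P hP.2 0
  | succ m ih =>
    intro σ hσ
    cases σ with
    | nil =>
      simp only [List.nil_prefix, indη_of]
      exact sum_wL P hP.2 (m+1)
    | cons a σ =>
      rw [sum_ofFn_succ (fun l => indη ((a :: σ) <+: l) (wL P l)) m]
      have key : ∀ b : Ω, ∑ τ : Fin m → Ω, indη ((a :: σ) <+: (b :: List.ofFn τ))
          (wL P (b :: List.ofFn τ)) = if b = a then P a * wL P σ else 0 := by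
        intro b
        by_cases hb : b = a
        · subst hb
          rw [if_pos rfl, ← ih σ (Nat.le_of_succ_le_succ hσ), Finset.mul_sum]
          refine Finset.sum_congr rfl fun τ _ => ?_
          rw [wL_cons, indη_mul,
            indη_congr (show ((b::σ) <+: (b :: List.ofFn τ)) ↔ σ <+: List.ofFn τ by
              simp [List.cons_prefix_cons])]
        · rw [if_neg hb]
          refine Finset.sum_eq_zero fun τ _ => ?_
          exact indη_not (fun hpre => hb (List.cons_prefix_cons.1 hpre).1.symm) _
      calc ∑ b : Ω, ∑ τ : Fin m → Ω, indη ((a :: σ) <+: (b :: List.ofFn τ))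
            (wL P (b :: List.ofFn τ))
          = ∑ b : Ω, if b = a then P a * wL P σ else 0 :=
            Finset.sum_congr rfl fun b _ => key b
        _ = P a * wL P σ := by rw [Finset.sum_ite_eq' Finset.univ a fun _ => P a * wL P σ]; simp
        _ = wL P (a :: σ) := (wL_cons P a σ).symm

/-- Core bound: the weight of length-`m` strings having a prefix `ρ'` on which `f` is
everywhere defined and selects an extension of `σ` is at most the weight of `σ`. -/
lemma selA_bound (P : Ω → ℝ) (hP : IsFPS P) (f : List Ω →. Bool) :
    ∀ (m : ℕ) (h σ : List Ω),
      ∑ τ : Fin m → Ω, indη (∃ ρ' : List Ω, ρ' <+: List.ofFn τ ∧ allDef f h ρ' ∧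
          σ <+: selA f h ρ') (wL P (List.ofFn τ)) ≤ wL P σ := by
  intro m
  induction m with
  | zero =>
    intro h σ
    have h1 : ∀ τ : Fin 0 → Ω, indη (∃ ρ' : List Ω, ρ' <+: List.ofFn τ ∧ allDef f h ρ' ∧
        σ <+: selA f h ρ') (wL P (List.ofFn τ)) ≤ wL P σ := by
      intro τ
      by_cases hQ : ∃ ρ' : List Ω, ρ' <+: List.ofFn τ ∧ allDef f h ρ' ∧ σ <+: selA f h ρ'
      · obtain ⟨ρ', hρ', _, hsel⟩ := hQ
        rw [List.ofFn_zero, List.prefix_nil] at hρ'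
        subst hρ'
        rw [selA_nil, List.prefix_nil] at hsel
        subst hsel
        rw [List.ofFn_zero]
        exact indη_le (by norm_num)
      · rw [indη_not hQ]
        exact wL_nonneg hP.1 σ
    calc ∑ τ : Fin 0 → Ω, indη _ (wL P (List.ofFn τ))
        ≤ ∑ τ : Fin 0 → Ω, wL P σ := Finset.sum_le_sum fun τ _ => h1 τ
      _ = wL P σ := by simp
  | succ m ih =>
    intro h σ
    cases σ with
    | nil =>
      calc ∑ τ : Fin (m+1) → Ω, indη _ (wL P (List.ofFn τ))
          ≤ ∑ τ : Fin (m+1) → Ω, wL P (List.ofFn τ) :=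
            Finset.sum_le_sum fun τ _ => indη_le (wL_nonneg hP.1 _)
        _ = 1 := sum_wL P hP.2 (m+1)
        _ = wL P [] := by simp
    | cons a σ' =>
      rw [sum_ofFn_succ (fun l => indη (∃ ρ' : List Ω, ρ' <+: l ∧ allDef f h ρ' ∧
        (a :: σ') <+: selA f h ρ') (wL P l)) m]
      by_cases hd : (f h).Dom
      · by_cases ht : true ∈ f h
        · -- f selects the next symbol
          have key : ∀ b : Ω, ∀ l : List Ω,
              (∃ ρ' : List Ω, ρ' <+: (b :: l) ∧ allDef f h ρ' ∧ (a :: σ') <+: selA f h ρ')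
              ↔ (b = a ∧ ∃ ρ'' : List Ω, ρ'' <+: l ∧ allDef f (h ++ [a]) ρ'' ∧
                  σ' <+: selA f (h ++ [a]) ρ'') := by
            intro b l
            constructor
            · rintro ⟨ρ', hpre, hdef, hsel⟩
              cases ρ' with
              | nil => simp at hsel
              | cons c ρ'' =>
                obtain ⟨hcb, hpre'⟩ := List.cons_prefix_cons.1 hpre
                subst hcb
                rw [selA_cons, if_pos ht] at hsel
                obtain ⟨hab, hsel'⟩ := List.cons_prefix_cons.1 hsel
                subst hab
                exact ⟨rfl, ρ'', hpre', (allDef_cons f h _ ρ'').1 hdef |>.2, hsel'⟩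
            · rintro ⟨hba, ρ'', hpre, hdef, hsel⟩
              subst hba
              refine ⟨b :: ρ'', by simpa using hpre, ⟨hd, hdef⟩, ?_⟩
              rw [selA_cons, if_pos ht]
              exact List.cons_prefix_cons.2 ⟨rfl, hsel⟩
          have key2 : ∀ b : Ω, ∑ τ : Fin m → Ω,
              indη (∃ ρ' : List Ω, ρ' <+: (b :: List.ofFn τ) ∧ allDef f h ρ' ∧
                (a :: σ') <+: selA f h ρ') (wL P (b :: List.ofFn τ))
              ≤ if b = a then P a * wL P σ' else 0 := by
            intro b
            by_cases hb : b = a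
            · subst hb
              rw [if_pos rfl]
              calc ∑ τ : Fin m → Ω, indη _ (wL P (b :: List.ofFn τ))
                  = ∑ τ : Fin m → Ω, P b * indη (∃ ρ'' : List Ω, ρ'' <+: List.ofFn τ ∧
                      allDef f (h ++ [b]) ρ'' ∧ σ' <+: selA f (h ++ [b]) ρ'')
                      (wL P (List.ofFn τ)) := by
                    refine Finset.sum_congr rfl fun τ _ => ?_
                    rw [wL_cons, indη_mul, indη_congr
                      ⟨fun h' => ((key b _).1 h').2, fun h' => (key b _).2 ⟨rfl, h'⟩⟩]
                _ ≤ P b * wL P σ' := by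
                    rw [← Finset.mul_sum]
                    exact mul_le_mul_of_nonneg_left (ih (h ++ [b]) σ') (hP.1 b)
            · rw [if_neg hb]
              exact le_of_eq (Finset.sum_eq_zero fun τ _ =>
                indη_not (fun hQ => hb ((key b (List.ofFn τ)).1 hQ).1) _)
          calc ∑ b : Ω, ∑ τ : Fin m → Ω, indη _ (wL P (b :: List.ofFn τ))
              ≤ ∑ b : Ω, if b = a then P a * wL P σ' else 0 :=
                Finset.sum_le_sum fun b _ => key2 b
            _ = P a * wL P σ' := by
                rw [Finset.sum_ite_eq' Finset.univ a fun _ => P a * wL P σ']; simp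
            _ = wL P (a :: σ') := (wL_cons P a σ').symm
        · -- f skips the next symbol
          have key : ∀ b : Ω, ∀ l : List Ω,
              (∃ ρ' : List Ω, ρ' <+: (b :: l) ∧ allDef f h ρ' ∧ (a :: σ') <+: selA f h ρ')
              ↔ (∃ ρ'' : List Ω, ρ'' <+: l ∧ allDef f (h ++ [b]) ρ'' ∧
                  (a :: σ') <+: selA f (h ++ [b]) ρ'') := by
            intro b l
            constructor
            · rintro ⟨ρ', hpre, hdef, hsel⟩
              cases ρ' with
              | nil => simp at hsel
              | cons c ρ'' =>
                obtain ⟨hcb, hpre'⟩ := List.cons_prefix_cons.1 hpre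
                subst hcb
                rw [selA_cons, if_neg ht] at hsel
                exact ⟨ρ'', hpre', (allDef_cons f h _ ρ'').1 hdef |>.2, hsel⟩
            · rintro ⟨ρ'', hpre, hdef, hsel⟩
              refine ⟨b :: ρ'', by simpa using hpre, ⟨hd, hdef⟩, ?_⟩
              rw [selA_cons, if_neg ht]
              exact hsel
          calc ∑ b : Ω, ∑ τ : Fin m → Ω, indη _ (wL P (b :: List.ofFn τ))
              = ∑ b : Ω, P b * ∑ τ : Fin m → Ω, indη (∃ ρ'' : List Ω,
                  ρ'' <+: List.ofFn τ ∧ allDef f (h ++ [b]) ρ'' ∧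
                  (a :: σ') <+: selA f (h ++ [b]) ρ'') (wL P (List.ofFn τ)) := by
                refine Finset.sum_congr rfl fun b _ => ?_
                rw [Finset.mul_sum]
                refine Finset.sum_congr rfl fun τ _ => ?_
                rw [wL_cons, indη_mul, indη_congr (key b (List.ofFn τ))]
            _ ≤ ∑ b : Ω, P b * wL P (a :: σ') :=
                Finset.sum_le_sum fun b _ =>
                  mul_le_mul_of_nonneg_left (ih (h ++ [b]) (a :: σ')) (hP.1 b)
            _ = wL P (a :: σ') := by rw [← Finset.sum_mul, hP.2, one_mul]
      · -- f undefined at h : empty event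
        refine le_trans (le_of_eq ?_) (wL_nonneg hP.1 (a :: σ'))
        refine Finset.sum_eq_zero fun b _ => Finset.sum_eq_zero fun τ _ => indη_not ?_ _
        rintro ⟨ρ', hpre, hdef, hsel⟩
        cases ρ' with
        | nil => simp at hsel
        | cons c ρ'' => exact hd ((allDef_cons f h c ρ'').1 hdef).1

end SelBound

section CylLe
variable {Ω : Type*} [Fintype Ω]

lemma W_nonneg {P : Ω → ℝ} (hP0 : ∀ a, 0 ≤ P a) (S : Set (List Ω)) (m : ℕ) : 0 ≤ W P S m := by
  rw [W_eq]
  exact Finset.sum_nonneg fun τ _ => indη_nonneg (wL_nonneg hP0 _)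

lemma W_le_one {P : Ω → ℝ} (hP : IsFPS P) (S : Set (List Ω)) (m : ℕ) : W P S m ≤ 1 := by
  rw [W_eq]
  calc ∑ τ : Fin m → Ω, indη (∃ σ ∈ S, σ <+: List.ofFn τ) (wL P (List.ofFn τ))
      ≤ ∑ τ : Fin m → Ω, wL P (List.ofFn τ) :=
        Finset.sum_le_sum fun τ _ => indη_le (wL_nonneg hP.1 _)
    _ = 1 := sum_wL P hP.2 m

lemma W_le_cylMeasure {P : Ω → ℝ} (hP : IsFPS P) (S : Set (List Ω)) (m : ℕ) :
    W P S m ≤ cylMeasure P S := by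
  rw [cylMeasure_eq_iSup]
  refine le_ciSup ⟨1, ?_⟩ m
  rintro x ⟨k, rfl⟩
  exact W_le_one hP S k

lemma cylMeasure_nonneg {P : Ω → ℝ} (hP : IsFPS P) (S : Set (List Ω)) :
    0 ≤ cylMeasure P S :=
  le_trans (W_nonneg hP.1 S 0) (W_le_cylMeasure hP S 0)

/-- the finset of strings over `Ω` of length at most `m` -/
noncomputable def listsLE (Ω : Type*) [Fintype Ω] (m : ℕ) : Finset (List Ω) :=
  (Finset.range (m+1)).biUnion fun k =>
    Finset.image (fun τ : Fin k → Ω => List.ofFn τ) Finset.univ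

lemma mem_listsLE {m : ℕ} {l : List Ω} : l ∈ listsLE Ω m ↔ l.length ≤ m := by
  constructor
  · intro hl
    obtain ⟨k, hk, hkl⟩ := Finset.mem_biUnion.1 hl
    obtain ⟨τ, _, rfl⟩ := Finset.mem_image.1 hkl
    rw [List.length_ofFn]
    exact Nat.lt_succ_iff.1 (Finset.mem_range.1 hk)
  · intro hl
    refine Finset.mem_biUnion.2 ⟨l.length, Finset.mem_range.2 (Nat.lt_succ_of_le hl), ?_⟩
    exact Finset.mem_image.2 ⟨fun i : Fin l.length => l[(i : ℕ)], Finset.mem_univ _,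
      List.ofFn_getElem⟩

/-- Key measure estimate: the preimage of `[Cset]` under the selection map has measure
at most that of `[Cset]`. -/
lemma cylMeasure_sel_le {P : Ω → ℝ} (hP : IsFPS P) (f : List Ω →. Bool) (Cset : Set (List Ω)) :
    cylMeasure P {ρ | allDef f [] ρ ∧ selA f [] ρ ∈ Cset} ≤ cylMeasure P Cset := by
  classical
  rw [cylMeasure_eq_iSup P {ρ | allDef f [] ρ ∧ selA f [] ρ ∈ Cset}]
  refine Real.iSup_le (fun m => ?_) (cylMeasure_nonneg hP Cset)
  set F : Finset (List Ω) :=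
    (listsLE Ω m).filter (fun σ => σ ∈ Cset ∧ ∀ σ' ∈ Cset, σ' <+: σ → σ' = σ) with hF
  have main1 : W P {ρ | allDef f [] ρ ∧ selA f [] ρ ∈ Cset} m ≤ ∑ σ ∈ F, wL P σ := by
    rw [W_eq]
    have pt : ∀ τ : Fin m → Ω,
        indη (∃ σ ∈ {ρ | allDef f [] ρ ∧ selA f [] ρ ∈ Cset}, σ <+: List.ofFn τ)
          (wL P (List.ofFn τ))
        ≤ ∑ σ ∈ F, indη (∃ ρ' : List Ω, ρ' <+: List.ofFn τ ∧ allDef f [] ρ' ∧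
            σ <+: selA f [] ρ') (wL P (List.ofFn τ)) := by
      intro τ
      by_cases hQ : ∃ σ ∈ {ρ | allDef f [] ρ ∧ selA f [] ρ ∈ Cset}, σ <+: List.ofFn τ
      · obtain ⟨ρ₀, hρ₀, hpre₀⟩ := hQ
        obtain ⟨hdef₀, hsel₀⟩ := hρ₀
        have hQne : ∃ k : ℕ, ∃ σ : List Ω, σ ∈ Cset ∧ σ.length = k ∧
            ∃ ρ' : List Ω, ρ' <+: List.ofFn τ ∧ allDef f [] ρ' ∧ σ <+: selA f [] ρ' :=
          ⟨(selA f [] ρ₀).length, selA f [] ρ₀, hsel₀, rfl, ρ₀, hpre₀, hdef₀, List.prefix_rfl⟩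
        obtain ⟨σ₀, hσC, hσlen, ρ', hρ'l, hρ'def, hσsel⟩ := Nat.find_spec hQne
        have hmin : ∀ σ' ∈ Cset, σ' <+: σ₀ → σ' = σ₀ := by
          intro σ' hσ'C hσ'pre
          by_contra hne
          have hlt : σ'.length < σ₀.length :=
            lt_of_le_of_ne hσ'pre.length_le fun hle => hne (hσ'pre.eq_of_length hle)
          exact Nat.find_min hQne (hσlen ▸ hlt)
            ⟨σ', hσ'C, rfl, ρ', hρ'l, hρ'def, hσ'pre.trans hσsel⟩
        have hσ₀len : σ₀.length ≤ m := by
          calc σ₀.length ≤ (selA f [] ρ').length := hσsel.length_le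
            _ ≤ ρ'.length := selA_length_le f ρ' []
            _ ≤ (List.ofFn τ).length := hρ'l.length_le
            _ = m := List.length_ofFn
        have hσ₀F : σ₀ ∈ F :=
          Finset.mem_filter.2 ⟨mem_listsLE.2 hσ₀len, hσC, hmin⟩
        calc indη (∃ σ ∈ {ρ | allDef f [] ρ ∧ selA f [] ρ ∈ Cset}, σ <+: List.ofFn τ)
              (wL P (List.ofFn τ))
            ≤ wL P (List.ofFn τ) := indη_le (wL_nonneg hP.1 _)
          _ = indη (∃ ρ'' : List Ω, ρ'' <+: List.ofFn τ ∧ allDef f [] ρ'' ∧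
                σ₀ <+: selA f [] ρ'') (wL P (List.ofFn τ)) :=
              (indη_of ⟨ρ', hρ'l, hρ'def, hσsel⟩ _).symm
          _ ≤ ∑ σ ∈ F, indη (∃ ρ'' : List Ω, ρ'' <+: List.ofFn τ ∧ allDef f [] ρ'' ∧
                σ <+: selA f [] ρ'') (wL P (List.ofFn τ)) :=
              Finset.single_le_sum (f := fun σ => indη (∃ ρ'' : List Ω, ρ'' <+: List.ofFn τ ∧
                allDef f [] ρ'' ∧ σ <+: selA f [] ρ'') (wL P (List.ofFn τ)))
                (fun σ _ => indη_nonneg (wL_nonneg hP.1 _)) hσ₀F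
      · rw [indη_not hQ _]
        exact Finset.sum_nonneg fun σ _ => indη_nonneg (wL_nonneg hP.1 _)
    refine le_trans (Finset.sum_le_sum fun τ _ => pt τ) ?_
    rw [Finset.sum_comm]
    exact Finset.sum_le_sum fun σ _ => selA_bound P hP f m [] σ
  have main2 : ∑ σ ∈ F, wL P σ ≤ W P Cset m := by
    have hrw : ∀ σ ∈ F, wL P σ = ∑ τ : Fin m → Ω, indη (σ <+: List.ofFn τ)
        (wL P (List.ofFn τ)) := fun σ hσ =>
      (sum_prefix_eq P hP m σ (mem_listsLE.1 (Finset.mem_filter.1 hσ).1)).symm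
    rw [Finset.sum_congr rfl hrw, Finset.sum_comm, W_eq]
    refine Finset.sum_le_sum fun τ _ => ?_
    by_cases hex : ∃ σ₁ ∈ F, σ₁ <+: List.ofFn τ
    · obtain ⟨σ₁, hσ₁F, hσ₁pre⟩ := hex
      obtain ⟨hσ₁C, hσ₁min⟩ := (Finset.mem_filter.1 hσ₁F).2
      have huniq : ∀ σ ∈ F, σ ≠ σ₁ →
          indη (σ <+: List.ofFn τ) (wL P (List.ofFn τ)) = 0 := by
        intro σ hσF hne
        refine indη_not (fun hpre => hne ?_) _
        obtain ⟨hσC, hσmin⟩ := (Finset.mem_filter.1 hσF).2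
        rcases List.prefix_or_prefix_of_prefix hpre hσ₁pre with h | h
        · exact hσ₁min σ hσC h
        · exact (hσmin σ₁ hσ₁C h).symm
      rw [Finset.sum_eq_single σ₁ huniq (fun h => absurd hσ₁F h), indη_of hσ₁pre,
        indη_of ⟨σ₁, hσ₁C, hσ₁pre⟩]
    · refine le_trans (le_of_eq (Finset.sum_eq_zero fun σ hσ =>
        indη_not (fun hpre => hex ⟨σ, hσ, hpre⟩) _)) (indη_nonneg (wL_nonneg hP.1 _))
  exact le_trans (le_trans main1 main2) (W_le_cylMeasure hP Cset m)

end CylLe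


section SeqSel
variable {Ω : Type*}

@[simp] lemma seqPrefix_zero (α : ℕ → Ω) : seqPrefix α 0 = [] := rfl

lemma seqPrefix_succ (α : ℕ → Ω) (k : ℕ) :
    seqPrefix α (k+1) = seqPrefix α k ++ [α k] := by
  rw [seqPrefix, List.ofFn_succ']
  simp [seqPrefix, List.concat_eq_append]

/-- the segment `α(k), …, α(k+m-1)` -/
def sseg (α : ℕ → Ω) (k m : ℕ) : List Ω := List.ofFn fun i : Fin m => α (k + i)

@[simp] lemma sseg_zero (α : ℕ → Ω) (k : ℕ) : sseg α k 0 = [] := rfl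

lemma sseg_cons (α : ℕ → Ω) (k m : ℕ) : sseg α k (m+1) = α k :: sseg α (k+1) m := by
  rw [sseg, List.ofFn_succ]
  have h0 : k + ((0 : Fin (m+1)) : ℕ) = k := by simp
  rw [h0]
  congr 1
  rw [sseg]
  congr 1
  funext i
  congr 1
  simp
  omega

lemma sseg_from_zero (α : ℕ → Ω) (m : ℕ) : sseg α 0 m = seqPrefix α m := by
  rw [sseg, seqPrefix]
  congr 1
  funext i
  congr 1
  omega

lemma allDef_sseg (f : List Ω →. Bool) (α : ℕ → Ω)
    (hdom : ∀ ℓ : ℕ, (f (seqPrefix α ℓ)).Dom) :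
    ∀ m k : ℕ, allDef f (seqPrefix α k) (sseg α k m) := by
  intro m
  induction m with
  | zero => intro k; simp
  | succ m ih =>
    intro k
    rw [sseg_cons, allDef_cons, ← seqPrefix_succ]
    exact ⟨hdom k, ih (k+1)⟩

lemma selA_sseg (f : List Ω →. Bool) (α : ℕ → Ω) (q : ℕ → Bool)
    (hq : ∀ ℓ, q ℓ = true ↔ true ∈ f (seqPrefix α ℓ)) :
    ∀ m k : ℕ, selA f (seqPrefix α k) (sseg α k m) = ((List.range' k m).filter q).map α := by
  intro m
  induction m with
  | zero => intro k; simp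
  | succ m ih =>
    intro k
    rw [sseg_cons, selA_cons, ← seqPrefix_succ, List.range'_succ, List.filter_cons]
    by_cases hk : true ∈ f (seqPrefix α k)
    · rw [if_pos hk, if_pos ((hq k).2 hk), List.map_cons, ih (k+1)]
    · rw [if_neg hk, if_neg (by simp [hq k, hk]), ih (k+1)]

lemma filter_range_eq_map_nth (p : ℕ → Prop) [DecidablePred p] (q : ℕ → Bool)
    (hq : ∀ ℓ, q ℓ = true ↔ p ℓ) :
    ∀ m : ℕ, (List.range m).filter q = (List.range (Nat.count p m)).map (Nat.nth p) := by
  intro m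
  induction m with
  | zero => simp [Nat.count_zero]
  | succ m ih =>
    rw [List.range_succ, List.filter_append, ih, Nat.count_succ]
    by_cases hm : p m
    · rw [if_pos hm, List.range_succ, List.map_append]
      congr 1
      simp only [List.filter_cons, List.filter_nil]
      rw [if_pos ((hq m).2 hm), List.map_cons, List.map_nil, Nat.nth_count hm]
    · rw [if_neg hm]
      simp only [List.filter_cons, List.filter_nil]
      rw [if_neg (by simp [hq m, hm]), add_zero, List.append_nil]

lemma map_range_eq_ofFn {X : Type*} (g : ℕ → X) (m : ℕ) :
    (List.range m).map g = List.ofFn (fun i : Fin m => g i) := by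
  induction m with
  | zero => simp
  | succ m ih =>
    rw [List.range_succ, List.map_append, ih, List.ofFn_succ']
    simp [List.concat_eq_append]

end SeqSel


section RE
variable {Ω : Type*} [Fintype Ω] [Nonempty Ω]

@[simp] lemma selA_singleton (f : List Ω →. Bool) (h : List Ω) (x : Ω) :
    selA f h [x] = if true ∈ f h then [x] else [] := by
  rw [selA_cons]
  by_cases ht : true ∈ f h <;> simp [ht]

lemma allDef_singleton (f : List Ω →. Bool) (h : List Ω) (x : Ω) :
    allDef f h [x] ↔ (f h).Dom := by
  rw [allDef_cons]
  simp

lemma take_eq_range_map {Γ : Type*} (d : Γ) :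
    ∀ (k : ℕ) (l : List Γ), k ≤ l.length →
      (List.range k).map (fun j => l.getD j d) = l.take k := by
  intro k
  induction k with
  | zero => simp
  | succ k ih =>
    intro l hk
    have hlt : k < l.length := hk
    rw [List.range_succ, List.map_append, ih l (Nat.le_of_succ_le hk), List.take_succ,
      List.getElem?_eq_getElem hlt]
    simp [List.getD, List.getElem?_eq_getElem hlt]

/-- The pullback of an r.e. set along the (partial computable) selection process is r.e. -/
lemma REset_pullback (f : List Ω →. Bool)
    (e : Ω ≃ Fin (Fintype.card Ω))
    (hf : Partrec fun σ : List (Fin (Fintype.card Ω)) => f (σ.map e.symm))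
    {C : Set (ℕ × List Ω)} (hC : REset C) :
    REset {q : ℕ × List Ω | allDef f [] q.2 ∧ (q.1, selA f [] q.2) ∈ C} := by
  classical
  obtain ⟨e', hC'⟩ := hC
  set d : Fin (Fintype.card Ω) := e (Classical.arbitrary Ω) with hd
  set F : List (Fin (Fintype.card Ω)) →. Bool := fun s => f (s.map e.symm) with hFdef
  set step : List (Fin (Fintype.card Ω)) → ℕ × List (Fin (Fintype.card Ω)) →. List (Fin (Fintype.card Ω)) := fun ρ y =>
    (F ((List.range y.1).map (fun j => ρ.getD j d))).map
      (fun b => cond b (y.2 ++ [ρ.getD y.1 d]) y.2) with hstepdef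
  set Grec : List (Fin (Fintype.card Ω)) → ℕ → Part (List (Fin (Fintype.card Ω))) := fun ρ k =>
    Nat.rec (Part.some []) (fun y IH => IH.bind fun s => step ρ (y, s)) k with hGrecdef
  -- computability of the iterated selection process
  have hstep : Partrec₂ step := by
    rw [hstepdef, hFdef]
    apply Partrec.map
    · apply hf.comp
      have harg : Primrec fun pz : List (Fin (Fintype.card Ω)) × (ℕ × List (Fin (Fintype.card Ω))) =>
          (List.range pz.2.1).map (fun j => pz.1.getD j d) :=
        Primrec.list_map (Primrec.list_range.comp (Primrec.fst.comp Primrec.snd))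
          (((Primrec.list_getD d).comp (Primrec.fst.comp Primrec.fst) Primrec.snd).to₂)
      exact harg.to_comp
    · have : Primrec fun pr : (List (Fin (Fintype.card Ω)) × (ℕ × List (Fin (Fintype.card Ω)))) × Bool =>
          cond pr.2 (pr.1.2.2 ++ [pr.1.1.getD pr.1.2.1 d]) pr.1.2.2 := by
        refine Primrec.cond Primrec.snd ?_ (Primrec.snd.comp (Primrec.snd.comp Primrec.fst))
        exact Primrec.list_append.comp (Primrec.snd.comp (Primrec.snd.comp Primrec.fst))
          (Primrec.list_cons.comp
            ((Primrec.list_getD d).comp (Primrec.fst.comp Primrec.fst)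
              (Primrec.fst.comp (Primrec.snd.comp Primrec.fst)))
            (Primrec.const []))
      exact this.to_comp.to₂
  have hG : Partrec fun ρ : List (Fin (Fintype.card Ω)) => Grec ρ ρ.length := by
    have := Partrec.nat_rec (f := fun ρ : List (Fin (Fintype.card Ω)) => ρ.length)
      (g := fun _ : List (Fin (Fintype.card Ω)) => Part.some ([] : List (Fin (Fintype.card Ω)))) (h := step)
      Computable.list_length (Partrec.const' _) hstep
    exact this.of_eq fun ρ => rfl
  -- semantics of the iterated selection process
  have specA : ∀ (ρ : List (Fin (Fintype.card Ω))) (k : ℕ), k ≤ ρ.length →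
      allDef f [] ((ρ.map e.symm).take k) →
      ∃ s ∈ Grec ρ k, s.map e.symm = selA f [] ((ρ.map e.symm).take k) := by
    intro ρ k
    induction k with
    | zero => intro _ _; exact ⟨[], by simp [hGrecdef], by simp⟩
    | succ k ih =>
      intro hk hdef
      have hklt : k < ρ.length := hk
      have hkΩ : k < (ρ.map e.symm).length := by simpa using hklt
      have hsplit : (ρ.map e.symm).take (k+1) =
          (ρ.map e.symm).take k ++ [(ρ.map e.symm)[k]] := by
        rw [List.take_succ, List.getElem?_eq_getElem hkΩ]
        rfl
      rw [hsplit] at hdef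
      rw [allDef_append] at hdef
      obtain ⟨hdef1, hdef2⟩ := hdef
      rw [List.nil_append] at hdef2
      have hDom : (f ((ρ.map e.symm).take k)).Dom :=
        (allDef_singleton f _ _).1 hdef2
      obtain ⟨s, hsmem, hsmap⟩ := ih (Nat.le_of_succ_le hk) hdef1
      have hargeq : (List.range k).map (fun j => ρ.getD j d) = ρ.take k :=
        take_eq_range_map d k ρ (Nat.le_of_succ_le hk)
      have hFeq : F (ρ.take k) = f ((ρ.map e.symm).take k) := by
        rw [hFdef]
        simp [List.map_take]
      have hFDom : (F (ρ.take k)).Dom := by rw [hFeq]; exact hDom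
      obtain ⟨b, hbmem⟩ := Part.dom_iff_mem.1 hFDom
      have hbf : b ∈ f ((ρ.map e.symm).take k) := by rwa [hFeq] at hbmem
      refine ⟨cond b (s ++ [ρ.getD k d]) s, ?_, ?_⟩
      · show _ ∈ (Grec ρ k).bind fun s => step ρ (k, s)
        refine Part.mem_bind_iff.2 ⟨s, hsmem, ?_⟩
        rw [hstepdef]
        simp only [hargeq]
        exact Part.mem_map_iff _ |>.2 ⟨b, hbmem, rfl⟩
      · rw [hsplit, selA_append, List.nil_append, selA_singleton, ← hsmap]
        have hgetd : ρ.getD k d = ρ[k] := List.getD_eq_getElem ρ d hklt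
        cases b with
        | true =>
          rw [if_pos hbf]
          simp [List.getD, List.getElem?_eq_getElem hklt, List.getElem_map]
        | false =>
          have hnt : ¬ true ∈ f ((ρ.map e.symm).take k) := fun h' =>
            Bool.noConfusion (Part.mem_unique h' hbf)
          rw [if_neg hnt]
          simp
  have specB : ∀ (ρ : List (Fin (Fintype.card Ω))) (k : ℕ), k ≤ ρ.length → (Grec ρ k).Dom →
      allDef f [] ((ρ.map e.symm).take k) := by
    intro ρ k
    induction k with
    | zero => intro _ _; simp
    | succ k ih =>
      intro hk hdom
      obtain ⟨x, hx⟩ := Part.dom_iff_mem.1 hdom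
      have hx' : x ∈ (Grec ρ k).bind fun s => step ρ (k, s) := hx
      obtain ⟨s, hsmem, hxstep⟩ := Part.mem_bind_iff.1 hx'
      have h1 : allDef f [] ((ρ.map e.symm).take k) :=
        ih (Nat.le_of_succ_le hk) (Part.dom_iff_mem.2 ⟨s, hsmem⟩)
      have hklt : k < ρ.length := hk
      have hkΩ : k < (ρ.map e.symm).length := by simpa using hklt
      obtain ⟨b, hbmem, _⟩ := Part.mem_map_iff _ |>.1 hxstep
      have hargeq : (List.range k).map (fun j => ρ.getD j d) = ρ.take k :=
        take_eq_range_map d k ρ (Nat.le_of_succ_le hk)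
      rw [hargeq] at hbmem
      have hDom : (f ((ρ.map e.symm).take k)).Dom := by
        have : (F (ρ.take k)).Dom := Part.dom_iff_mem.2 ⟨b, hbmem⟩
        rw [hFdef] at this
        simpa [List.map_take] using this
      have hsplit : (ρ.map e.symm).take (k+1) =
          (ρ.map e.symm).take k ++ [(ρ.map e.symm)[k]] := by
        rw [List.take_succ, List.getElem?_eq_getElem hkΩ]
        rfl
      rw [hsplit, allDef_append, List.nil_append]
      exact ⟨h1, (allDef_singleton f _ _).2 hDom⟩
  -- assemble the semidecision procedure
  set Φ : ℕ × List (Fin (Fintype.card Ω)) →. Unit := fun q =>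
    (Grec q.2 q.2.length).bind fun s =>
      Part.assert ((q.1, (s.map fun i => e' (e.symm i)).map e'.symm) ∈ C)
        fun _ => Part.some () with hΦdef
  have hΦ : Partrec Φ := by
    refine Partrec.bind (hG.comp Computable.snd) ?_
    have harg2 : Computable fun qs : (ℕ × List (Fin (Fintype.card Ω))) × List (Fin (Fintype.card Ω)) =>
        (qs.1.1, qs.2.map fun i => e' (e.symm i)) := by
      have : Primrec fun qs : (ℕ × List (Fin (Fintype.card Ω))) × List (Fin (Fintype.card Ω)) =>
          ((qs.1.1, qs.2.map fun i => e' (e.symm i)) : ℕ × List (Fin (Fintype.card Ω))) :=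
        Primrec.pair (Primrec.fst.comp Primrec.fst)
          (Primrec.list_map Primrec.snd
            ((Primrec.dom_finite (fun i : Fin (Fintype.card Ω) => e' (e.symm i))).comp Primrec.snd).to₂)
      exact this.to_comp
    exact (hC'.comp harg2).to₂
  -- the domain of Φ is the encoded pullback set
  refine ⟨e, ?_⟩
  have hdom_iff : ∀ p : ℕ × List (Fin (Fintype.card Ω)), (Φ p).Dom ↔
      (allDef f [] (p.2.map e.symm) ∧ (p.1, selA f [] (p.2.map e.symm)) ∈ C) := by
    rintro ⟨n, ρ⟩
    have hlen' : (ρ.map e.symm).take ρ.length = ρ.map e.symm := by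
      have : ρ.length = (ρ.map e.symm).length := by simp
      rw [this]
      exact List.take_length
    have hmapmap : ∀ s : List (Fin (Fintype.card Ω)),
        (s.map fun i => e' (e.symm i)).map e'.symm = s.map e.symm := by
      intro s
      rw [List.map_map]
      exact List.map_congr_left fun i _ => Equiv.symm_apply_apply e' (e.symm i)
    constructor
    · intro hdom
      obtain ⟨u, hu⟩ := Part.dom_iff_mem.1 hdom
      obtain ⟨s, hsmem, hua⟩ := Part.mem_bind_iff.1 hu
      have hall : allDef f [] (ρ.map e.symm) := by
        have := specB ρ ρ.length le_rfl (Part.dom_iff_mem.2 ⟨s, hsmem⟩)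
        rwa [hlen'] at this
      obtain ⟨s₀, hs₀mem, hs₀map⟩ := specA ρ ρ.length le_rfl (by rwa [hlen'])
      have hss : s = s₀ := Part.mem_unique hsmem hs₀mem
      obtain ⟨hP, -⟩ := Part.mem_assert_iff.1 hua
      refine ⟨hall, ?_⟩
      rw [hmapmap s, hss, hs₀map, hlen'] at hP
      exact hP
    · rintro ⟨hall, hmemC⟩
      obtain ⟨s₀, hs₀mem, hs₀map⟩ := specA ρ ρ.length le_rfl (by rwa [hlen'])
      refine Part.dom_iff_mem.2 ⟨(), Part.mem_bind_iff.2 ⟨s₀, hs₀mem, ?_⟩⟩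
      refine Part.mem_assert ?_ (Part.mem_some ())
      rw [hmapmap s₀, hs₀map, hlen']
      exact hmemC
  exact (hΦ.dom_re).of_eq fun p => hdom_iff p

end RE

/-- closure under selection by a partial computable selection function.
Positions are indexed from `0`, so `seqPrefix α k` is the prefix of length `k` and the
element following this prefix is `α k`; `Nat.nth p k` is the `k`-th element (in increasing
order, counting from `0`) of the set of `ℓ` such that the selection function answers
YES (= `true`) on the prefix of length `ℓ`. -/
theorem closure_under_partial_computable_selection {Ω : Type*} [Fintype Ω] [Nonempty Ω]
    (P : Ω → ℝ) (hP : IsFPS P) (α : ℕ → Ω) (hα : MLRandom P α)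
    (f : List Ω →. Bool)
    (hcomp : ∃ e : Ω ≃ Fin (Fintype.card Ω),
      Partrec fun σ : List (Fin (Fintype.card Ω)) => f (σ.map e.symm))
    (hdom : ∀ k : ℕ, (f (seqPrefix α k)).Dom)
    (hinf : {k : ℕ | true ∈ f (seqPrefix α k)}.Infinite) :
    MLRandom P (fun k => α (Nat.nth (fun ℓ => true ∈ f (seqPrefix α ℓ)) k)) := by
  classical
  obtain ⟨e, hfc⟩ := hcomp
  intro C hC
  obtain ⟨hCre, hCm⟩ := hC
  set p : ℕ → Prop := fun ℓ => true ∈ f (seqPrefix α ℓ) with hp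
  have hinf' : (setOf p).Infinite := hinf
  set D : Set (ℕ × List Ω) := {q | allDef f [] q.2 ∧ (q.1, selA f [] q.2) ∈ C} with hD
  have hDtest : MLTest P D := by
    constructor
    · exact REset_pullback f e hfc hCre
    · intro n hn
      refine lt_of_le_of_lt ?_ (hCm n hn)
      exact cylMeasure_sel_le hP f {σ | (n, σ) ∈ C}
  obtain ⟨n, hn, hnα⟩ := hα D hDtest
  refine ⟨n, hn, ?_⟩
  rintro ⟨σ, hσC, hσβ⟩
  apply hnα
  set q' : ℕ → Bool := fun ℓ => decide (p ℓ) with hq'def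
  have hq : ∀ ℓ, q' ℓ = true ↔ true ∈ f (seqPrefix α ℓ) := by
    intro ℓ
    simp [hq'def, hp]
  rcases hlen : σ.length with _ | j
  · -- the selected string in C is empty
    have hσnil : σ = [] := List.length_eq_zero_iff.1 hlen
    refine ⟨[], ⟨trivial, ?_⟩, ?_⟩
    · show (n, selA f [] []) ∈ C
      rw [selA_nil, ← hσnil]
      exact hσC
    · rfl
  · -- the selected string has length j+1
    set m : ℕ := Nat.nth p j + 1 with hm
    have hseq0 : seqPrefix α 0 = ([] : List Ω) := rfl
    refine ⟨seqPrefix α m, ⟨?_, ?_⟩, ?_⟩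
    · show allDef f [] (seqPrefix α m)
      have := allDef_sseg f α hdom m 0
      rwa [sseg_from_zero, hseq0] at this
    · show (n, selA f [] (seqPrefix α m)) ∈ C
      have h1 : selA f [] (seqPrefix α m) = ((List.range' 0 m).filter q').map α := by
        have := selA_sseg f α q' hq m 0
        rwa [sseg_from_zero, hseq0] at this
      have h2 : List.range' 0 m = List.range m := (List.range_eq_range').symm
      have h3 : (List.range m).filter q' = (List.range (Nat.count p m)).map (Nat.nth p) :=
        filter_range_eq_map_nth p q' (fun ℓ => hq ℓ) m
      have hcount : Nat.count p m = j + 1 := by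
        rw [hm, Nat.count_succ, Nat.count_nth_of_infinite hinf',
          if_pos (Nat.nth_mem_of_infinite hinf' j)]
      have h4 : selA f [] (seqPrefix α m) = σ := by
        rw [h1, h2, h3, hcount, List.map_map, map_range_eq_ofFn, ← hσβ, hlen]
        rfl
      rw [h4]
      exact hσC
    · show seqPrefix α (seqPrefix α m).length = seqPrefix α m
      congr 1
      simp [seqPrefix]
      rfl


end Paper
end

section
/- Let P be a finite probability space on an alphabet Ω and let A ⊆ Ω. If α is a Martin-Löf P-random infinite sequence over Ω, then the infinite binary sequence χ_A(α) is Martin-Löf P_A-random, where χ_A(α) is defined by (χ_A(α))(n) = 1 if α(n) ∈ A and 0 otherwise, and P_A is the finite probability space on {0,1} with P_A(1) = P(A) and P_A(0) = 1 − P(A), where P(A) = ∑_{a∈A} P(a). -/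
open scoped BigOperators

namespace Paper

/-- The probability `P(A)` of an event `A ⊆ Ω`. -/
noncomputable def evP {Ω : Type*} [Fintype Ω] (P : Ω → ℝ) (A : Set Ω) : ℝ :=
  ∑ x, A.indicator P x

section Aux

lemma repred_comp {α β : Type*} [Primcodable α] [Primcodable β] {p : β → Prop}
    (hp : REPred p) {f : α → β} (hf : Computable f) : REPred fun a => p (f a) :=
  Partrec.comp hp hf

lemma primrec_of_fin {n : ℕ} {σ : Type*} [Primcodable σ] (g : Fin n → σ) : Primrec g :=
  Primrec.fin_app.comp (Primrec.const g) Primrec.id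

section Main
variable {Ω : Type*} [Fintype Ω] [DecidableEq Ω]

lemma sum_eq (P : Ω → ℝ) (hP : IsFPS P) (A : Finset Ω) (S : Set (List Bool)) (n : ℕ) :
    (∑ τ : Fin n → Ω,
      Set.indicator {τ : Fin n → Ω |
          ∃ σ ∈ {σ : List Ω | σ.map (fun a => decide (a ∈ A)) ∈ S}, σ <+: List.ofFn τ}
        (fun τ => ∏ i, P (τ i)) τ)
    = ∑ b : Fin n → Bool,
      Set.indicator {b : Fin n → Bool | ∃ ρ ∈ S, ρ <+: List.ofFn b}
        (fun b => ∏ i, (if b i then evP P (A : Set Ω) else 1 - evP P (A : Set Ω))) b := by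
  classical
  set χ : Ω → Bool := fun a => decide (a ∈ A) with hχ
  set Q : Bool → ℝ := fun c => if c then evP P (A : Set Ω) else 1 - evP P (A : Set Ω) with hQ
  have hev : evP P (A : Set Ω) = ∑ a ∈ A, P a := by
    simp [evP, Set.indicator_apply, Finset.sum_ite_mem]
  have hQsum : ∀ c : Bool, ∑ a ∈ Finset.univ.filter (fun a => χ a = c), P a = Q c := by
    intro c
    have hA : Finset.univ.filter (fun a => χ a = true) = A := by
      ext a; simp [hχ]
    cases c with
    | true => simp [hA, hQ, hev]
    | false =>
      have h1 : (∑ a ∈ Finset.univ.filter (fun a => χ a = true), P a)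
          + ∑ a ∈ Finset.univ.filter (fun a => ¬ (χ a = true)), P a = 1 := by
        rw [Finset.sum_filter_add_sum_filter_not]; exact hP.2
      have h2 : Finset.univ.filter (fun a => ¬ (χ a = true))
          = Finset.univ.filter (fun a => χ a = false) := by
        ext a; simp
      rw [hA] at h1
      rw [← h2]
      simp only [hQ, if_neg Bool.false_ne_true, hev]
      linarith
  set F : (Fin n → Bool) → ℝ :=
    Set.indicator {b : Fin n → Bool | ∃ ρ ∈ S, ρ <+: List.ofFn b} (fun _ => (1:ℝ)) with hF
  have hiff : ∀ τ : Fin n → Ω,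
      (τ ∈ {τ : Fin n → Ω |
          ∃ σ ∈ {σ : List Ω | σ.map χ ∈ S}, σ <+: List.ofFn τ})
        ↔ (χ ∘ τ) ∈ {b : Fin n → Bool | ∃ ρ ∈ S, ρ <+: List.ofFn b} := by
    intro τ
    constructor
    · rintro ⟨σ, hσ, hpre⟩
      refine ⟨σ.map χ, hσ, ?_⟩
      rw [← List.map_ofFn]
      exact hpre.map χ
    · rintro ⟨ρ, hρ, hpre⟩
      refine ⟨(List.ofFn τ).take ρ.length, ?_, List.take_prefix _ _⟩
      have hmap : ((List.ofFn τ).take ρ.length).map χ = ρ := by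
        rw [List.map_take, List.map_ofFn]
        exact (List.prefix_iff_eq_take.mp hpre).symm
      show ((List.ofFn τ).take ρ.length).map χ ∈ S
      rw [hmap]; exact hρ
  have key : ∀ τ : Fin n → Ω,
      Set.indicator {τ : Fin n → Ω |
          ∃ σ ∈ {σ : List Ω | σ.map χ ∈ S}, σ <+: List.ofFn τ}
        (fun τ => ∏ i, P (τ i)) τ
      = F (χ ∘ τ) * ∏ i, P (τ i) := by
    intro τ
    rw [Set.indicator_apply, hF, Set.indicator_apply]
    by_cases h : (χ ∘ τ) ∈ {b : Fin n → Bool | ∃ ρ ∈ S, ρ <+: List.ofFn b}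
    · rw [if_pos ((hiff τ).mpr h), if_pos h, one_mul]
    · rw [if_neg (fun hh => h ((hiff τ).mp hh)), if_neg h, zero_mul]
  calc (∑ τ : Fin n → Ω,
        Set.indicator {τ : Fin n → Ω |
            ∃ σ ∈ {σ : List Ω | σ.map χ ∈ S}, σ <+: List.ofFn τ}
          (fun τ => ∏ i, P (τ i)) τ)
      = ∑ τ : Fin n → Ω, F (χ ∘ τ) * ∏ i, P (τ i) :=
        Finset.sum_congr rfl fun τ _ => key τ
    _ = ∑ b : Fin n → Bool, ∑ τ ∈ Finset.univ.filter (fun τ : Fin n → Ω => χ ∘ τ = b),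
          F (χ ∘ τ) * ∏ i, P (τ i) :=
        (Finset.sum_fiberwise_of_maps_to (fun τ _ => Finset.mem_univ (χ ∘ τ)) _).symm
    _ = ∑ b : Fin n → Bool, F b *
          ∑ τ ∈ Finset.univ.filter (fun τ : Fin n → Ω => χ ∘ τ = b), ∏ i, P (τ i) := by
        refine Finset.sum_congr rfl fun b _ => ?_
        rw [Finset.mul_sum]
        exact Finset.sum_congr rfl fun τ hτ => by rw [(Finset.mem_filter.mp hτ).2]
    _ = ∑ b : Fin n → Bool, F b * ∏ i, Q (b i) := by
        refine Finset.sum_congr rfl fun b _ => ?_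
        congr 1
        have hfib : Finset.univ.filter (fun τ : Fin n → Ω => χ ∘ τ = b)
            = Fintype.piFinset (fun i => Finset.univ.filter (fun a => χ a = b i)) := by
          ext τ
          simp [Fintype.mem_piFinset, funext_iff, Function.comp]
        rw [hfib, ← Finset.prod_univ_sum]
        exact Finset.prod_congr rfl fun i _ => hQsum (b i)
    _ = ∑ b : Fin n → Bool,
          Set.indicator {b : Fin n → Bool | ∃ ρ ∈ S, ρ <+: List.ofFn b}
            (fun b => ∏ i, Q (b i)) b := by
        refine Finset.sum_congr rfl fun b _ => ?_
        rw [hF, Set.indicator_apply, Set.indicator_apply]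
        by_cases h : b ∈ {b : Fin n → Bool | ∃ ρ ∈ S, ρ <+: List.ofFn b}
        · rw [if_pos h, if_pos h, one_mul]
        · rw [if_neg h, if_neg h, zero_mul]

end Main
end Aux

/-- If `α` is Martin-Löf `P`-random then the characteristic binary
sequence `χ_A(α)` of the event `A` (with `1 = true`, `0 = false`) is Martin-Löf
`P_A`-random, where `P_A(1) = P(A)` and `P_A(0) = 1 − P(A)`. -/
theorem characteristic_sequence_random {Ω : Type*} [Fintype Ω] [Nonempty Ω] [DecidableEq Ω]
    (P : Ω → ℝ) (hP : IsFPS P) (A : Finset Ω) (α : ℕ → Ω) (hα : MLRandom P α) :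
    MLRandom
      (fun b : Bool => if b then evP P (A : Set Ω) else 1 - evP P (A : Set Ω))
      (fun n => decide (α n ∈ A)) := by
  classical
  intro C hC
  set χ : Ω → Bool := fun a => decide (a ∈ A) with hχ
  set C' : Set (ℕ × List Ω) := {p | (p.1, p.2.map χ) ∈ C} with hC'
  have htest : MLTest P C' := by
    constructor
    · -- r.e.
      obtain ⟨e2, hre⟩ := hC.1
      refine ⟨Fintype.equivFin Ω, ?_⟩
      set e := Fintype.equivFin Ω
      set g : Fin (Fintype.card Ω) → Fin (Fintype.card Bool) :=
        fun i => e2 (χ (e.symm i)) with hg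
      have hgc : Computable g := Primrec.to_comp (primrec_of_fin g)
      have hfc : Computable (fun p : ℕ × List (Fin (Fintype.card Ω)) =>
          ((p.1, p.2.map g) : ℕ × List (Fin (Fintype.card Bool)))) := by
        exact Computable.pair Computable.fst
          (Primrec.to_comp (Primrec.list_map Primrec.snd
            ((primrec_of_fin g).comp Primrec.snd).to₂))
      have := repred_comp hre hfc
      refine this.of_eq fun p => ?_
      simp only [hC', Set.mem_setOf_eq, List.map_map]
      constructor
      · intro h
        convert h using 3
        funext i
        simp [hg]
        exact (e2.symm_apply_apply _).symm
      · intro h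
        convert h using 3
        funext i
        simp [hg]
        exact e2.symm_apply_apply _
    · intro n hn
      have hmeq : cylMeasure P {σ | (n, σ) ∈ C'}
          = cylMeasure (fun b : Bool => if b then evP P (A : Set Ω) else 1 - evP P (A : Set Ω))
              {σ | (n, σ) ∈ C} := by
        unfold cylMeasure
        refine congrArg _ (funext fun m => ?_)
        exact sum_eq P hP A {ρ | (n, ρ) ∈ C} m
      rw [hmeq]
      exact hC.2 n hn
  obtain ⟨n, hn, hno⟩ := hα C' htest
  refine ⟨n, hn, ?_⟩
  rintro ⟨ρ, hρ, hpre⟩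
  apply hno
  refine ⟨seqPrefix α ρ.length, ?_, ?_⟩
  · show (n, (seqPrefix α ρ.length).map χ) ∈ C
    have : (seqPrefix α ρ.length).map χ = ρ := by
      rw [seqPrefix, List.map_ofFn]
      exact hpre
    rw [this]; exact hρ
  · simp [seqPrefix]

end Paper
end

section
/- (Closure under the mapping by a random variable.) Let P be a finite probability space on an alphabet Ω, and let X : Ω → Ω' be a function to an alphabet Ω'. If α is a Martin-Löf P-random infinite sequence over Ω, then the infinite sequence X(α) over Ω' defined by (X(α))(k) = X(α(k)) for all k ∈ ℕ⁺ is Martin-Löf X(P)-random, where X(P) is the finite probability space on Ω' defined by (X(P))(x) = ∑_{a ∈ X^{-1}(x)} P(a). -/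
open scoped BigOperators

namespace Paper

section Aux

variable {Ω Ω' : Type*} [Fintype Ω] [Fintype Ω']

lemma evP_eq (P : Ω → ℝ) (X : Ω → Ω') (x : Ω') [DecidableEq Ω'] :
    evP P {a | X a = x} = ∑ a ∈ Finset.univ.filter (fun a => X a = x), P a := by
  classical
  rw [evP, Finset.sum_indicator_eq_sum_filter]
  rfl

lemma fiber_sum_s12 (P : Ω → ℝ) (X : Ω → Ω') {n : ℕ} (τ' : Fin n → Ω') [DecidableEq Ω'] :
    ∑ τ ∈ Finset.univ.filter (fun τ : Fin n → Ω => X ∘ τ = τ'), ∏ i, P (τ i)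
      = ∏ i, evP P {a | X a = τ' i} := by
  classical
  simp_rw [evP_eq P X]
  rw [Finset.prod_univ_sum]
  apply Finset.sum_congr
  · ext τ
    simp [Fintype.mem_piFinset, funext_iff, Function.comp]
  · intros; rfl

lemma pred_iff (X : Ω → Ω') (S' : Set (List Ω')) {n : ℕ} (τ : Fin n → Ω) :
    (∃ σ ∈ {σ : List Ω | σ.map X ∈ S'}, σ <+: List.ofFn τ) ↔
      (∃ σ' ∈ S', σ' <+: List.ofFn (X ∘ τ)) := by
  constructor
  · rintro ⟨σ, hσ, hpre⟩
    exact ⟨σ.map X, hσ, by simpa [List.map_ofFn] using hpre.map X⟩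
  · rintro ⟨σ', hσ', hpre⟩
    refine ⟨(List.ofFn τ).take σ'.length, ?_, List.take_prefix _ _⟩
    have : ((List.ofFn τ).take σ'.length).map X = σ' := by
      rw [List.map_take, List.map_ofFn]
      exact (List.prefix_iff_eq_take.mp hpre).symm
    simpa [this] using hσ'

lemma cyl_eq (P : Ω → ℝ) (X : Ω → Ω') (S' : Set (List Ω')) :
    cylMeasure P {σ | σ.map X ∈ S'} = cylMeasure (fun x => evP P {a | X a = x}) S' := by
  classical
  unfold cylMeasure
  congr 1
  funext n
  rw [← Finset.sum_fiberwise Finset.univ (fun τ : Fin n → Ω => X ∘ τ)]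
  apply Finset.sum_congr rfl
  intro τ' _
  by_cases h : ∃ σ' ∈ S', σ' <+: List.ofFn τ'
  · rw [Set.indicator_of_mem (s := {τ' : Fin n → Ω' | ∃ σ ∈ S', σ <+: List.ofFn τ'}) h]
    rw [← fiber_sum_s12 P X τ']
    apply Finset.sum_congr rfl
    intro τ hτ
    simp only [Finset.mem_filter] at hτ
    rw [Set.indicator_of_mem]
    rw [Set.mem_setOf_eq, pred_iff, hτ.2]
    exact h
  · rw [Set.indicator_of_notMem (s := {τ' : Fin n → Ω' | ∃ σ ∈ S', σ <+: List.ofFn τ'}) h]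
    apply Finset.sum_eq_zero
    intro τ hτ
    simp only [Finset.mem_filter] at hτ
    apply Set.indicator_of_notMem
    rw [Set.mem_setOf_eq, pred_iff, hτ.2]
    exact h

lemma REset_pull (X : Ω → Ω') (C : Set (ℕ × List Ω')) (hC : REset C) :
    REset {p : ℕ × List Ω | (p.1, p.2.map X) ∈ C} := by
  classical
  obtain ⟨e', hre⟩ := hC
  obtain ⟨e⟩ : Nonempty (Ω ≃ Fin (Fintype.card Ω)) := ⟨Fintype.equivFin Ω⟩
  refine ⟨e, ?_⟩
  have hg : Computable fun p : ℕ × List (Fin (Fintype.card Ω)) =>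
      (p.1, p.2.map (fun i => e' (X (e.symm i)))) :=
    (Primrec.fst.pair ((Primrec.list_map Primrec.snd
      ((Primrec.dom_finite (fun i => e' (X (e.symm i)))).comp Primrec.snd).to₂))).to_comp
  have hcomp : REPred fun p : ℕ × List (Fin (Fintype.card Ω)) =>
      ((p.1, (p.2.map (fun i => e' (X (e.symm i)))).map e'.symm) ∈ C) := by
    unfold REPred at hre ⊢
    exact hre.comp hg
  refine hcomp.of_eq fun p => ?_
  simp only [List.map_map, Set.mem_setOf_eq]
  constructor <;> intro h <;> [skip; skip] <;>
    · convert h using 3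
      ext i
      simp [Function.comp]

end Aux

/-- closure under the mapping by a random variable.
If `α` is Martin-Löf `P`-random and `X : Ω → Ω'` is a random variable, then `X(α)` is
Martin-Löf `X(P)`-random, where `(X(P))(x) = ∑_{a ∈ X⁻¹(x)} P(a)`. -/
theorem closure_under_random_variable {Ω Ω' : Type*} [Fintype Ω] [Nonempty Ω]
    [Fintype Ω'] [Nonempty Ω']
    (P : Ω → ℝ) (hP : IsFPS P) (X : Ω → Ω') (α : ℕ → Ω) (hα : MLRandom P α) :
    MLRandom (fun x : Ω' => evP P {a : Ω | X a = x}) (fun k => X (α k)) := by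
  intro C hC
  obtain ⟨hre, hbound⟩ := hC
  set C' : Set (ℕ × List Ω) := {p | (p.1, p.2.map X) ∈ C} with hC'def
  have hC'test : MLTest P C' := by
    refine ⟨REset_pull X C hre, fun n hn => ?_⟩
    have heq : {σ : List Ω | (n, σ) ∈ C'} = {σ : List Ω | σ.map X ∈ {σ' | (n, σ') ∈ C}} := rfl
    rw [heq, cyl_eq]
    exact hbound n hn
  obtain ⟨n, hn, hno⟩ := hα C' hC'test
  refine ⟨n, hn, fun hopen => hno ?_⟩
  obtain ⟨σ', hσ', hpre⟩ := hopen
  refine ⟨seqPrefix α σ'.length, ?_, ?_⟩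
  · show (n, (seqPrefix α σ'.length).map X) ∈ C
    have hmap : (seqPrefix α σ'.length).map X = σ' := by
      rw [seqPrefix, List.map_ofFn]
      exact hpre
    rw [hmap]
    exact hσ'
  · simp [seqPrefix, List.length_ofFn]

end Paper
end
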